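/- arXiv:2003.14204 — 7 statements merged into one kernel-verified Lean document; each statement's English description precedes it below -/
import Mathlib

section
/- Let N = (P, T, Pre, Post) be an acyclic Petri net, let M : P → ℕ be a marking, and let y ∈ ℕ^T. Then the integer vector M + C·y is componentwise nonnegative (hence a marking M') if and only if there exists a finite sequence σ ∈ T* with firing vector φ(σ) = y such that σ is enabled at M and M[σ⟩M'. -/
open scoped BigOperators

/-- A Petri net over places `P` and transitions `T`. -/
structure PetriNet (P T : Type) where
  Pre : P → T → ℕ
  Post : P → T → ℕ

namespace PetriNet

variable {P T : Type}

/-- Incidence matrix `C = Post − Pre` (integer valued). -/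
def C (N : PetriNet P T) (p : P) (t : T) : ℤ :=
  (N.Post p t : ℤ) - (N.Pre p t : ℤ)

/-- A transition `t` is enabled at marking `M`. -/
def Enabled (N : PetriNet P T) (M : P → ℕ) (t : T) : Prop :=
  ∀ p, N.Pre p t ≤ M p

/-- `Fires N M σ M'` means the sequence `σ` is enabled at `M` and its firing
yields `M'`, i.e. `M[σ⟩M'`. -/
inductive Fires (N : PetriNet P T) : (P → ℕ) → List T → (P → ℕ) → Prop
  | nil (M : P → ℕ) : Fires N M [] M
  | cons {M M' M'' : P → ℕ} {t : T} {σ : List T} :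
      N.Enabled M t →
      (∀ p, M' p = M p + N.Post p t - N.Pre p t) →
      Fires N M' σ M'' →
      Fires N M (t :: σ) M''

/-- The reachability set `R(N, M0)`. -/
def Reach (N : PetriNet P T) (M0 : P → ℕ) : Set (P → ℕ) :=
  {M | ∃ σ : List T, N.Fires M0 σ M}

/-- Arcs of the underlying directed graph on `P ⊕ T`, where only transitions
in `TI` are kept (the `TI`-induced subnet). -/
def Arc (N : PetriNet P T) (TI : Set T) : (P ⊕ T) → (P ⊕ T) → Prop
  | Sum.inl p, Sum.inr t => t ∈ TI ∧ 0 < N.Pre p t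
  | Sum.inr t, Sum.inl p => t ∈ TI ∧ 0 < N.Post p t
  | _, _ => False

/-- The `TI`-induced subnet is acyclic: no directed cycle in its graph. -/
def AcyclicOn (N : PetriNet P T) (TI : Set T) : Prop :=
  ∀ x, ¬ Relation.TransGen (N.Arc TI) x x

/-- `(TE, TI)` is a basis partition: `TE` and `TI` partition `T` and the
`TI`-induced subnet is acyclic. -/
def IsBasisPartition (N : PetriNet P T) (TE TI : Set T) : Prop :=
  (∀ t, t ∈ TE ↔ t ∉ TI) ∧ N.AcyclicOn TI

/-- Boundedness of the marked net `⟨N, M0⟩`. -/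
def Bounded (N : PetriNet P T) (M0 : P → ℕ) : Prop :=
  ∃ k : ℕ, ∀ M ∈ N.Reach M0, ∀ p, M p ≤ k

/-- A marking is dead if no transition is enabled at it. -/
def Dead (N : PetriNet P T) (M : P → ℕ) : Prop :=
  ∀ t : T, ¬ N.Enabled M t

/-- The set `Σ(M, t)` of explanations of `t` at `M`: implicit sequences whose
firing from `M` yields a marking enabling `t`. -/
def Expl (N : PetriNet P T) (TI : Set T) (M : P → ℕ) (t : T) : Set (List T) :=
  {σ | (∀ u ∈ σ, u ∈ TI) ∧ ∃ M', N.Fires M σ M' ∧ ∀ p, N.Pre p t ≤ M' p}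

/-- The set `Σ_min(M, t)` of minimal explanations of `t` at `M`. -/
def ExplMin [DecidableEq T] (N : PetriNet P T) (TI : Set T) (M : P → ℕ) (t : T) :
    Set (List T) :=
  {σ | σ ∈ N.Expl TI M t ∧
    ¬ ∃ σ' ∈ N.Expl TI M t,
      (∀ u, σ'.count u ≤ σ.count u) ∧ ∃ u, σ'.count u ≠ σ.count u}

/-- The set `Σ_max(M, t)` of maximal explanations of `t` at `M`. -/
def ExplMax [DecidableEq T] (N : PetriNet P T) (TI : Set T) (M : P → ℕ) (t : T) :
    Set (List T) :=
  {σ | σ ∈ N.Expl TI M t ∧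
    ¬ ∃ σ' ∈ N.Expl TI M t,
      (∀ u, σ.count u ≤ σ'.count u) ∧ ∃ u, σ'.count u ≠ σ.count u}

/-- `Y_min(M, t)`: firing vectors of minimal explanations. -/
def Ymin [DecidableEq T] (N : PetriNet P T) (TI : Set T) (M : P → ℕ) (t : T) :
    Set (T → ℕ) :=
  {y | ∃ σ ∈ N.ExplMin TI M t, ∀ u, σ.count u = y u}

/-- `Y_max(M, t)`: firing vectors of maximal explanations. -/
def Ymax [DecidableEq T] (N : PetriNet P T) (TI : Set T) (M : P → ℕ) (t : T) :
    Set (T → ℕ) :=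
  {y | ∃ σ ∈ N.ExplMax TI M t, ∀ u, σ.count u = y u}

/-- The set of basis markings `M_B` (smallest set containing `M0` and closed
under minimal-explanation steps). -/
inductive Basis [DecidableEq T] [Fintype T] (N : PetriNet P T) (TE TI : Set T)
    (M0 : P → ℕ) : (P → ℕ) → Prop
  | base : Basis N TE TI M0 M0
  | step {M M' : P → ℕ} {t : T} {y : T → ℕ} :
      Basis N TE TI M0 M →
      t ∈ TE →
      y ∈ N.Ymin TI M t →
      (∀ p, (M' p : ℤ) = (M p : ℤ) + (∑ u, N.C p u * y u) + N.C p t) →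
      Basis N TE TI M0 M'

/-- The set of minimax basis markings `M_BM` (smallest set containing `M0` and
closed under minimal- or maximal-explanation steps). -/
inductive Minimax [DecidableEq T] [Fintype T] (N : PetriNet P T) (TE TI : Set T)
    (M0 : P → ℕ) : (P → ℕ) → Prop
  | base : Minimax N TE TI M0 M0
  | step {M M' : P → ℕ} {t : T} {y : T → ℕ} :
      Minimax N TE TI M0 M →
      t ∈ TE →
      (y ∈ N.Ymin TI M t ∨ y ∈ N.Ymax TI M t) →
      (∀ p, (M' p : ℤ) = (M p : ℤ) + (∑ u, N.C p u * y u) + N.C p t) →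
      Minimax N TE TI M0 M'

/-- The implicit reach `R_I(M_b)`: markings reachable from `M_b` by firing
only implicit transitions. -/
def ReachI (N : PetriNet P T) (TI : Set T) (Mb : P → ℕ) : Set (P → ℕ) :=
  {M | ∃ σ : List T, (∀ u ∈ σ, u ∈ TI) ∧ N.Fires Mb σ M}

/-- One step of the minimax-BRG: `M1 ⇒ M2`. -/
def BrgStep [DecidableEq T] [Fintype T] (N : PetriNet P T) (TE TI : Set T)
    (M1 M2 : P → ℕ) : Prop :=
  ∃ t ∈ TE, ∃ y : T → ℕ, (y ∈ N.Ymin TI M1 t ∨ y ∈ N.Ymax TI M1 t) ∧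
    ∀ p, (M2 p : ℤ) = (M1 p : ℤ) + (∑ u, N.C p u * y u) + N.C p t

/-- One step of the BRG using only minimal explanations. -/
def MinBrgStep [DecidableEq T] [Fintype T] (N : PetriNet P T) (TE TI : Set T)
    (M1 M2 : P → ℕ) : Prop :=
  ∃ t ∈ TE, ∃ y ∈ N.Ymin TI M1 t,
    ∀ p, (M2 p : ℤ) = (M1 p : ℤ) + (∑ u, N.C p u * y u) + N.C p t

/-- The minimax-BRG is unobstructed: every minimax basis marking can reach, by
BRG-steps, an i-coreachable minimax basis marking. -/
def Unobstructed [DecidableEq T] [Fintype T] (N : PetriNet P T) (TE TI : Set T)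
    (M0 : P → ℕ) (MF : Set (P → ℕ)) : Prop :=
  ∀ Mb, N.Minimax TE TI M0 Mb →
    ∃ Mb', Relation.ReflTransGen (N.BrgStep TE TI) Mb Mb' ∧
      N.Minimax TE TI M0 Mb' ∧ (N.ReachI TI Mb' ∩ MF).Nonempty

/-- `Σ_I,max(M)`: maximal implicit firing sequences at `M`. -/
def ImplMax [DecidableEq T] (N : PetriNet P T) (TI : Set T) (M : P → ℕ) :
    Set (List T) :=
  {σ | (∀ u ∈ σ, u ∈ TI) ∧ (∃ M', N.Fires M σ M') ∧
    ¬ ∃ σ' : List T, (∀ u ∈ σ', u ∈ TI) ∧ (∃ M', N.Fires M σ' M') ∧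
      (∀ u, σ.count u ≤ σ'.count u) ∧ ∃ u, σ'.count u ≠ σ.count u}

/-- `Y_I,max(M)`: firing vectors of maximal implicit firing sequences. -/
def YImax [DecidableEq T] (N : PetriNet P T) (TI : Set T) (M : P → ℕ) :
    Set (T → ℕ) :=
  {y | ∃ σ ∈ N.ImplMax TI M, ∀ u, σ.count u = y u}

end PetriNet

open PetriNet in
private lemma statement0_lift {P T : Type} (N : PetriNet P T) (r : T → T → Prop)
    (hr : ∀ u t, r u t → Relation.TransGen (N.Arc Set.univ) (Sum.inr u) (Sum.inr t)) :
    ∀ {a b : T}, Relation.TransGen r a b →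
      Relation.TransGen (N.Arc Set.univ) (Sum.inr a) (Sum.inr b) := by
  intro a b h
  induction h with
  | single h => exact hr _ _ h
  | tail _ h2 ih => exact ih.trans (hr _ _ h2)

open PetriNet in
private lemma statement0_key {P T : Type} [Fintype T] [DecidableEq T]
    (N : PetriNet P T) (hacyc : N.AcyclicOn Set.univ) :
    ∀ n (y : T → ℕ), (∑ t, y t) = n → ∀ M : P → ℕ,
      (∀ p, 0 ≤ (M p : ℤ) + ∑ t, N.C p t * y t) →
      ∃ σ : List T, (∀ t, σ.count t = y t) ∧
        ∃ M' : P → ℕ, N.Fires M σ M' ∧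
          ∀ p, (M' p : ℤ) = (M p : ℤ) + ∑ t, N.C p t * y t := by
  intro n
  induction n using Nat.strong_induction_on with
  | _ n ih =>
    intro y hn M h
    by_cases hy : ∀ t, y t = 0
    · refine ⟨[], by simp [hy], M, PetriNet.Fires.nil M, fun p => ?_⟩
      simp [hy]
    · push_neg at hy
      obtain ⟨t0, ht0⟩ := hy
      -- the dependency relation
      set r : T → T → Prop :=
        fun u t => 0 < y u ∧ ∃ p, 0 < N.Post p u ∧ 0 < N.Pre p t with hr_def
      have hr_arc : ∀ u t, r u t →
          Relation.TransGen (N.Arc Set.univ) (Sum.inr u) (Sum.inr t) := by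
        rintro u t ⟨-, p, hpost, hpre⟩
        have a1 : N.Arc Set.univ (Sum.inr u) (Sum.inl p) := ⟨Set.mem_univ _, hpost⟩
        have a2 : N.Arc Set.univ (Sum.inl p) (Sum.inr t) := ⟨Set.mem_univ _, hpre⟩
        exact Relation.TransGen.head a1 (Relation.TransGen.single a2)
      haveI : IsTrans T (Relation.TransGen r) := ⟨fun _ _ _ => Relation.TransGen.trans⟩
      haveI : IsIrrefl T (Relation.TransGen r) := by
        refine ⟨fun a ha => ?_⟩
        exact hacyc (Sum.inr a) (statement0_lift N r hr_arc ha)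
      have hwf : WellFounded (Relation.TransGen r) :=
        Finite.wellFounded_of_trans_of_irrefl _
      obtain ⟨m, hm, hmin⟩ := hwf.has_min {t | 0 < y t} ⟨t0, Nat.pos_of_ne_zero ht0⟩
      have hm : 0 < y m := hm
      -- m is enabled at M
      have hen : N.Enabled M m := by
        intro p
        by_contra hpre
        push_neg at hpre
        have hC : (∑ t, N.C p t * (y t : ℤ)) =
            ((∑ t, N.Post p t * y t : ℕ) : ℤ) - ((∑ t, N.Pre p t * y t : ℕ) : ℤ) := by
          push_cast
          rw [← Finset.sum_sub_distrib]
          apply Finset.sum_congr rfl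
          intro t _
          simp [PetriNet.C]; ring
        have h1 : ((∑ t, N.Pre p t * y t : ℕ) : ℤ) ≤
            (M p : ℤ) + ((∑ t, N.Post p t * y t : ℕ) : ℤ) := by
          have := h p; rw [hC] at this; linarith
        have h1' : (∑ t, N.Pre p t * y t) ≤ M p + ∑ t, N.Post p t * y t := by
          exact_mod_cast h1
        have h2 : N.Pre p m * y m ≤ ∑ t, N.Pre p t * y t :=
          Finset.single_le_sum (f := fun t => N.Pre p t * y t) (fun t _ => Nat.zero_le _) (Finset.mem_univ m)
        have h3 : N.Pre p m ≤ N.Pre p m * y m := Nat.le_mul_of_pos_right _ hm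
        have hpos : 0 < ∑ t, N.Post p t * y t := by omega
        have : ∃ u, 0 < N.Post p u * y u := by
          by_contra hc
          push_neg at hc
          have : (∑ t, N.Post p t * y t) = 0 :=
            Finset.sum_eq_zero (fun t _ => Nat.le_zero.mp (hc t))
          omega
        obtain ⟨u, hu⟩ := this
        obtain ⟨hupost, huy⟩ := Nat.mul_ne_zero_iff.mp hu.ne'
        exact hmin u (Nat.pos_of_ne_zero huy)
          (Relation.TransGen.single
            ⟨Nat.pos_of_ne_zero huy, p, Nat.pos_of_ne_zero hupost, by omega⟩)
      -- fire m
      set M' : P → ℕ := fun p => M p + N.Post p m - N.Pre p m with hM'def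
      have hM' : ∀ p, (M' p : ℤ) = (M p : ℤ) + N.C p m := by
        intro p
        have : N.Pre p m ≤ M p + N.Post p m := le_trans (hen p) (Nat.le_add_right _ _)
        simp only [hM'def, PetriNet.C]
        push_cast [Nat.cast_sub this]
        ring
      set y' : T → ℕ := Function.update y m (y m - 1) with hy'def
      have hkey : ∀ p, (∑ t, N.C p t * (y' t : ℤ)) =
          (∑ t, N.C p t * y t) - N.C p m := by
        intro p
        have hstep : ∀ t, N.C p t * (y' t : ℤ) =
            N.C p t * y t - (if t = m then N.C p m else 0) := by
          intro t
          by_cases ht : t = m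
          · subst ht
            have h1 : ((y t - 1 : ℕ) : ℤ) = (y t : ℤ) - 1 := by
              have := hm; push_cast [Nat.cast_sub this]; ring
            simp [hy'def, Function.update_self, h1]; ring
          · simp [hy'def, Function.update_of_ne ht, ht]
        rw [Finset.sum_congr rfl (fun t _ => hstep t), Finset.sum_sub_distrib]
        simp
      have hsum' : (∑ t, y' t) + 1 = ∑ t, y t := by
        rw [Finset.sum_update_of_mem (Finset.mem_univ m),
          ← Finset.add_sum_erase _ y (Finset.mem_univ m), ← Finset.erase_eq]
        omega
      have hlt : (∑ t, y' t) < n := by omega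
      have hcond : ∀ p, 0 ≤ (M' p : ℤ) + ∑ t, N.C p t * y' t := by
        intro p
        rw [hM' p, hkey p]
        have := h p; linarith
      obtain ⟨σ', hcount', M'', hf'', heq''⟩ := ih _ hlt y' rfl M' hcond
      refine ⟨m :: σ', ?_, M'', ?_, ?_⟩
      · intro t
        by_cases ht : t = m
        · subst ht
          rw [List.count_cons_self, hcount', hy'def, Function.update_self]
          omega
        · rw [List.count_cons_of_ne (Ne.symm ht), hcount', hy'def, Function.update_of_ne ht]
      · exact PetriNet.Fires.cons hen (fun p => rfl) hf''
      · intro p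
        rw [heq'' p, hM' p, hkey p]
        ring

open PetriNet in
/-- For an acyclic net, `M + C·y ≥ 0` iff there is a sequence
`σ` with firing vector `y`, enabled at `M`, leading to the marking
`M' = M + C·y`. -/
theorem statement0 {P T : Type} [Fintype T] [DecidableEq T]
    (N : PetriNet P T) (hacyc : N.AcyclicOn Set.univ)
    (M : P → ℕ) (y : T → ℕ) :
    (∀ p, 0 ≤ (M p : ℤ) + ∑ t, N.C p t * y t) ↔
      ∃ σ : List T, (∀ t, σ.count t = y t) ∧
        ∃ M' : P → ℕ, N.Fires M σ M' ∧
          ∀ p, (M' p : ℤ) = (M p : ℤ) + ∑ t, N.C p t * y t := by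
  constructor
  · intro h
    exact statement0_key N hacyc _ y rfl M h
  · rintro ⟨σ, -, M', -, heq⟩ p
    rw [← heq p]
    exact Int.natCast_nonneg _
end

section
/- Let N = (P, T, Pre, Post) be a Petri net with a basis partition π = (T_E, T_I), and let M_b be any marking. Then the implicit reach of M_b equals the set of markings characterized by the state equation of the implicit subnet: R_I(M_b) = { M : P → ℕ | ∃ y ∈ ℕ^{T_I}, M = M_b + C_I·y as integer vectors }. -/
open scoped BigOperators

namespace PetriNet

variable {P T : Type}

lemma fires_state [Fintype T] [DecidableEq T] (N : PetriNet P T)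
    {Mb M : P → ℕ} {σ : List T} (h : N.Fires Mb σ M) :
    ∀ p, (M p : ℤ) = (Mb p : ℤ) + ∑ t, N.C p t * (σ.count t : ℤ) := by
  induction h with
  | nil M => intro p; simp
  | @cons M M' M'' t σ hen hM' hσ ih =>
    intro p
    have hM'p : (M' p : ℤ) = (M p : ℤ) + N.C p t := by
      have h1 := hM' p
      have h2 := hen p
      have : (M' p : ℤ) = (M p : ℤ) + (N.Post p t : ℤ) - (N.Pre p t : ℤ) := by
        rw [h1]; omega
      rw [this, C]; ring
    have hcount : ∀ u : T, ((t :: σ).count u : ℤ)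
        = (σ.count u : ℤ) + if u = t then 1 else 0 := by
      intro u
      rcases eq_or_ne u t with rfl | hne
      · simp [List.count_cons]
      · simp [List.count_cons, hne, Ne.symm hne]
    calc (M'' p : ℤ) = (M' p : ℤ) + ∑ u, N.C p u * (σ.count u : ℤ) := ih p
      _ = (M p : ℤ) + ∑ u, N.C p u * ((t :: σ).count u : ℤ) := by
          rw [hM'p]
          have : ∑ u, N.C p u * ((t :: σ).count u : ℤ)
              = ∑ u, (N.C p u * (σ.count u : ℤ) + if u = t then N.C p u else 0) := by
            refine Finset.sum_congr rfl fun u _ => ?_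
            rw [hcount u]; split <;> ring
          rw [this, Finset.sum_add_distrib, Finset.sum_ite_eq' Finset.univ t]
          simp; ring

lemma acyclic_min [Fintype T] [DecidableEq T] (N : PetriNet P T) {TI : Set T}
    (hac : N.AcyclicOn TI) {s : Set T} (hs : s.Nonempty) (hsub : s ⊆ TI) :
    ∃ t ∈ s, ∀ t' ∈ s, ¬ ∃ p, 0 < N.Post p t' ∧ 0 < N.Pre p t := by
  set r : T → T → Prop := fun a b =>
    a ∈ TI ∧ b ∈ TI ∧ ∃ p, 0 < N.Post p a ∧ 0 < N.Pre p b with hr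
  have hstep : ∀ a b, r a b →
      Relation.TransGen (N.Arc TI) (Sum.inr a) (Sum.inr b) := by
    rintro a b ⟨ha, hb, p, h1, h2⟩
    have h1' : N.Arc TI (Sum.inr a) (Sum.inl p) := ⟨ha, h1⟩
    have h2' : N.Arc TI (Sum.inl p) (Sum.inr b) := ⟨hb, h2⟩
    exact Relation.TransGen.tail (Relation.TransGen.single h1') h2'
  have htg : ∀ a b, Relation.TransGen r a b →
      Relation.TransGen (N.Arc TI) (Sum.inr a) (Sum.inr b) := by
    intro a b h
    induction h with
    | single h => exact hstep _ _ h
    | tail _ h ih => exact ih.trans (hstep _ _ h)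
  haveI : IsIrrefl T (Relation.TransGen r) :=
    ⟨fun a h => hac (Sum.inr a) (htg a a h)⟩
  have hwf : WellFounded (Relation.TransGen r) :=
    Finite.wellFounded_of_trans_of_irrefl _
  have hwfr : WellFounded r := Subrelation.wf (fun h => Relation.TransGen.single h) hwf
  obtain ⟨t, hts, hmin⟩ := hwfr.has_min s hs
  refine ⟨t, hts, fun t' ht' ⟨p, h1, h2⟩ => ?_⟩
  exact hmin t' ht' ⟨hsub ht', hsub hts, p, h1, h2⟩

lemma state_reach [Fintype T] [DecidableEq T] (N : PetriNet P T) {TI : Set T}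
    (hac : N.AcyclicOn TI) :
    ∀ (n : ℕ) (Mb M : P → ℕ) (y : T → ℕ), (∑ t, y t) = n →
      (∀ t ∉ TI, y t = 0) →
      (∀ p, (M p : ℤ) = (Mb p : ℤ) + ∑ t, N.C p t * (y t : ℤ)) →
      ∃ σ : List T, (∀ u ∈ σ, u ∈ TI) ∧ N.Fires Mb σ M := by
  intro n
  induction n with
  | zero =>
    intro Mb M y hsum hsupp heq
    have hy : ∀ t, y t = 0 := by
      intro t
      exact (Finset.sum_eq_zero_iff.mp hsum) t (Finset.mem_univ t)
    have : M = Mb := by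
      funext p
      have := heq p
      simp [hy] at this
      exact_mod_cast this
    exact ⟨[], by simp, by rw [this]; exact Fires.nil Mb⟩
  | succ n ih =>
    intro Mb M y hsum hsupp heq
    have hsne : ({t | y t ≠ 0} : Set T).Nonempty := by
      by_contra h
      push_neg at h
      have hz : ∀ t, y t = 0 := fun t =>
        not_not.mp (Set.eq_empty_iff_forall_notMem.mp h t)
      simp [hz] at hsum
    have hsubTI : ({t | y t ≠ 0} : Set T) ⊆ TI := by
      intro t ht
      by_contra htt
      exact ht (hsupp t htt)
    obtain ⟨t, hts, hmin⟩ := N.acyclic_min hac hsne hsubTI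
    have hyt : 0 < y t := Nat.pos_of_ne_zero hts
    -- t is enabled at Mb
    have hen : N.Enabled Mb t := by
      intro p
      rcases Nat.eq_zero_or_pos (N.Pre p t) with h0 | hpos
      · omega
      · -- all u with y u ≠ 0 have Post p u = 0
        have hpost : ∀ u, y u ≠ 0 → N.Post p u = 0 := by
          intro u hu
          by_contra hpu
          exact hmin u hu ⟨p, Nat.pos_of_ne_zero hpu, hpos⟩
        have hC : ∀ u, N.C p u * (y u : ℤ) = -(N.Pre p u * (y u : ℤ)) := by
          intro u
          rcases Nat.eq_zero_or_pos (y u) with h0 | hupos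
          · simp [h0]
          · rw [C, hpost u hupos.ne']; push_cast; ring
        have hMp := heq p
        rw [Finset.sum_congr rfl (fun u _ => hC u)] at hMp
        have hge : (N.Pre p t : ℤ) * (y t : ℤ) ≤ ∑ u, (N.Pre p u : ℤ) * (y u : ℤ) := by
          refine Finset.single_le_sum (f := fun u => (N.Pre p u : ℤ) * (y u : ℤ))
            (fun u _ => by positivity) (Finset.mem_univ t)
        have hMnn : (0 : ℤ) ≤ (M p : ℤ) := Int.natCast_nonneg _
        have : (N.Pre p t : ℤ) * (y t : ℤ) ≤ (Mb p : ℤ) := by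
          rw [Finset.sum_neg_distrib] at hMp
          omega
        have h1 : (N.Pre p t : ℤ) ≤ (N.Pre p t : ℤ) * (y t : ℤ) := by
          nlinarith [Int.natCast_nonneg (N.Pre p t), (by exact_mod_cast hyt : (1:ℤ) ≤ (y t : ℤ))]
        exact_mod_cast h1.trans this
    -- fire t from Mb
    set Mb' : P → ℕ := fun p => Mb p + N.Post p t - N.Pre p t with hMb'
    have hMb'int : ∀ p, (Mb' p : ℤ) = (Mb p : ℤ) + N.C p t := by
      intro p
      have h2 := hen p
      simp only [hMb', C]
      omega
    set y' : T → ℕ := fun u => if u = t then y t - 1 else y u with hy'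
    have hsum' : ∑ u, y' u = n := by
      have : ∑ u, y' u = (∑ u, y u) - 1 := by
        rw [hy']
        rw [← Finset.sum_erase_add _ _ (Finset.mem_univ t),
            ← Finset.sum_erase_add _ y (Finset.mem_univ t)]
        have : ∑ u ∈ Finset.univ.erase t, (if u = t then y t - 1 else y u)
            = ∑ u ∈ Finset.univ.erase t, y u := by
          refine Finset.sum_congr rfl fun u hu => ?_
          simp [Finset.mem_erase.mp hu |>.1]
        rw [this]; simp; omega
      omega
    have hsupp' : ∀ u ∉ TI, y' u = 0 := by
      intro u hu
      rw [hy']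
      rcases eq_or_ne u t with rfl | hne
      · exact absurd (hsubTI hts) hu
      · simp [hne, hsupp u hu]
    have heq' : ∀ p, (M p : ℤ) = (Mb' p : ℤ) + ∑ u, N.C p u * (y' u : ℤ) := by
      intro p
      have hsplit : ∑ u, N.C p u * (y u : ℤ)
          = (∑ u, N.C p u * (y' u : ℤ)) + N.C p t := by
        have : ∀ u, N.C p u * (y u : ℤ)
            = N.C p u * (y' u : ℤ) + (if u = t then N.C p t else 0) := by
          intro u
          rcases eq_or_ne u t with rfl | hne
          · simp [hy']
            have : ((y u : ℤ)) = ((y u - 1 : ℕ) : ℤ) + 1 := by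
              omega
            rw [this]; ring
          · simp [hy', hne]
        rw [Finset.sum_congr rfl (fun u _ => this u), Finset.sum_add_distrib,
            Finset.sum_ite_eq' Finset.univ t]
        simp
      rw [heq p, hsplit, hMb'int p]; ring
    obtain ⟨σ, hσTI, hσ⟩ := ih Mb' M y' hsum' hsupp' heq'
    refine ⟨t :: σ, ?_, ?_⟩
    · intro u hu
      rcases List.mem_cons.mp hu with rfl | hu
      · exact hsubTI hts
      · exact hσTI u hu
    · exact Fires.cons hen (fun p => rfl) hσ

end PetriNet

open PetriNet in
/-- The implicit reach equals the solution set of the state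
equation of the (acyclic) implicit subnet. -/
theorem statement1 {P T : Type} [Fintype T] [DecidableEq T]
    (N : PetriNet P T) (TE TI : Set T)
    (hbp : N.IsBasisPartition TE TI) (Mb : P → ℕ) :
    N.ReachI TI Mb =
      {M : P → ℕ | ∃ y : T → ℕ, (∀ t ∉ TI, y t = 0) ∧
        ∀ p, (M p : ℤ) = (Mb p : ℤ) + ∑ t, N.C p t * y t} := by
  ext M
  constructor
  · rintro ⟨σ, hσTI, hf⟩
    refine ⟨fun t => σ.count t, fun t ht => ?_, N.fires_state hf⟩
    exact List.count_eq_zero.mpr (fun hmem => ht (hσTI t hmem))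
  · rintro ⟨y, hsupp, heq⟩
    exact N.state_reach hbp.2 (∑ t, y t) Mb M y rfl hsupp heq
end

section
/- Let ⟨N, M0⟩ be a marked Petri net with a basis partition π = (T_E, T_I), and let M be a marking. Then M ∈ R(N, M0) if and only if there exists a minimax basis marking M_b ∈ M_BM such that M ∈ R_I(M_b). -/
open scoped BigOperators

namespace PetriNetAux

open PetriNet

variable {P T : Type}

lemma fires_append {N : PetriNet P T} {M M' M'' : P → ℕ} {σ₁ σ₂ : List T}
    (h1 : N.Fires M σ₁ M') (h2 : N.Fires M' σ₂ M'') :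
    N.Fires M (σ₁ ++ σ₂) M'' := by
  induction h1 with
  | nil => simpa using h2
  | cons he hm _ ih => exact PetriNet.Fires.cons he hm (ih h2)

lemma fires_append_iff {N : PetriNet P T} {M M'' : P → ℕ} {σ₁ σ₂ : List T} :
    N.Fires M (σ₁ ++ σ₂) M'' ↔ ∃ M', N.Fires M σ₁ M' ∧ N.Fires M' σ₂ M'' := by
  constructor
  · intro h
    induction σ₁ generalizing M with
    | nil => exact ⟨M, PetriNet.Fires.nil M, by simpa using h⟩
    | cons t σ ih =>
      rw [List.cons_append] at h
      cases h with
      | cons he hm h' =>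
        obtain ⟨Mm, h1, h2⟩ := ih h'
        exact ⟨Mm, PetriNet.Fires.cons he hm h1, h2⟩
  · rintro ⟨M', h1, h2⟩; exact fires_append h1 h2

lemma fires_marking_eq [Fintype T] [DecidableEq T] {N : PetriNet P T}
    {M M' : P → ℕ} {σ : List T} (h : N.Fires M σ M') (p : P) :
    (M' p : ℤ) = M p + ∑ u, N.C p u * σ.count u := by
  induction h with
  | nil M => simp
  | @cons M M' M'' t σ he hm hf ih =>
    have hle : N.Pre p t ≤ M p + N.Post p t := le_trans (he p) (Nat.le_add_right _ _)
    have hM' : (M' p : ℤ) = M p + N.C p t := by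
      rw [hm p, Nat.cast_sub hle]; push_cast [PetriNet.C]; ring
    rw [ih, hM']
    have hc : ∀ u, ((t :: σ).count u : ℤ) = σ.count u + (if u = t then 1 else 0) := by
      intro u; rw [List.count_cons]
      by_cases h : u = t
      · simp [h]
      · simp [h, Ne.symm h]
    have : ∀ u, N.C p u * ((t :: σ).count u : ℤ)
        = N.C p u * (σ.count u : ℤ) + N.C p u * (if u = t then 1 else 0) := by
      intro u; rw [hc u]; ring
    simp only [this, Finset.sum_add_distrib, mul_ite, mul_one, mul_zero,
      Finset.sum_ite_eq' Finset.univ t (fun u => N.C p u), Finset.mem_univ, if_true]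
    ring

/-- Key lemma on acyclic subnets: any nonnegative-result firing vector supported
on `TI` is realizable by an actual firing sequence. -/
lemma acyclic_fire [Fintype T] [DecidableEq T] {N : PetriNet P T} {TI : Set T}
    (hac : N.AcyclicOn TI) :
    ∀ n (z : T → ℕ), (∑ u, z u = n) → (∀ u, 0 < z u → u ∈ TI) →
    ∀ M M' : P → ℕ, (∀ p, (M' p : ℤ) = M p + ∑ u, N.C p u * z u) →
    ∃ σ : List T, (∀ u ∈ σ, u ∈ TI) ∧ (∀ u, σ.count u = z u) ∧ N.Fires M σ M' := by
  intro n
  induction n using Nat.strong_induction_on with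
  | _ n ih =>
    intro z hn hzTI M M' hM
    by_cases hz0 : ∀ u, z u = 0
    · refine ⟨[], by simp, by simp [hz0], ?_⟩
      have : M' = M := by
        funext p
        have := hM p
        simp [hz0] at this
        exact_mod_cast this
      rw [this]; exact PetriNet.Fires.nil M
    · push_neg at hz0
      obtain ⟨t0, ht0⟩ := hz0
      have ht0' : 0 < z t0 := Nat.pos_of_ne_zero ht0
      -- pick a topologically minimal transition in the support of z
      set S := {u : T // 0 < z u}
      have : Finite S := Subtype.finite
      let r : S → S → Prop := fun a b =>
        Relation.TransGen (N.Arc TI) (Sum.inr a.1) (Sum.inr b.1)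
      haveI : IsTrans S r := ⟨fun _ _ _ hab hbc => hab.trans hbc⟩
      haveI : IsIrrefl S r := ⟨fun a ha => hac _ ha⟩
      obtain ⟨t, -, htmin⟩ := (Finite.wellFounded_of_trans_of_irrefl r).has_min
        Set.univ ⟨⟨t0, ht0'⟩, Set.mem_univ _⟩
      have htmin' : ∀ u : S, ¬ r u t := fun u => htmin u (Set.mem_univ u)
      have htTI : (t : T) ∈ TI := hzTI t t.2
      -- no transition in the support of z outputs into an input place of t
      have hnofeed : ∀ p, 0 < N.Pre p t → ∀ u, 0 < z u → N.Post p u = 0 := by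
        intro p hp u hu
        by_contra hpost
        have hpost' : 0 < N.Post p u := Nat.pos_of_ne_zero hpost
        have harc1 : N.Arc TI (Sum.inr u) (Sum.inl p) := ⟨hzTI u hu, hpost'⟩
        have harc2 : N.Arc TI (Sum.inl p) (Sum.inr (t : T)) := ⟨htTI, hp⟩
        exact htmin' ⟨u, hu⟩
          (Relation.TransGen.head harc1 (Relation.TransGen.single harc2))
      -- t is enabled at M
      have henabled : N.Enabled M t := by
        intro p
        rcases Nat.eq_zero_or_pos (N.Pre p t) with h0 | hp
        · simp [h0]
        · have hterm : ∀ u, N.C p u * (z u : ℤ) ≤ 0 := by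
            intro u
            rcases Nat.eq_zero_or_pos (z u) with h | h
            · simp [h]
            · have : N.C p u ≤ 0 := by
                simp [PetriNet.C, hnofeed p hp u h]
              exact mul_nonpos_of_nonpos_of_nonneg this (by positivity)
          have hsum : ∑ u, N.C p u * (z u : ℤ) ≤ N.C p (t : T) * z (t : T) := by
            have hneg := Finset.sum_le_sum_of_subset_of_nonneg
              (Finset.subset_univ {(t : T)})
              (fun i _ _ => neg_nonneg.mpr (hterm i))
              (f := fun u => -(N.C p u * (z u : ℤ)))
            simp only [Finset.sum_singleton, Finset.sum_neg_distrib] at hneg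
            have : (∑ u, -(N.C p u * (z u : ℤ))) = -∑ u, N.C p u * (z u : ℤ) := by
              rw [Finset.sum_neg_distrib]
            linarith [hneg]
          have hCt : N.C p (t : T) = -(N.Pre p t : ℤ) := by
            simp [PetriNet.C, hnofeed p hp (t : T) t.2]
          have hCtz : N.C p (t : T) * (z (t : T) : ℤ) ≤ -(N.Pre p t : ℤ) := by
            rw [hCt]
            have h1 : (1 : ℤ) ≤ z (t : T) := by exact_mod_cast t.2
            nlinarith [Int.ofNat_nonneg (N.Pre p t)]
          have h0' : (0 : ℤ) ≤ M' p := Int.ofNat_nonneg _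
          have := hM p
          have : (0 : ℤ) ≤ M p - N.Pre p t := by linarith
          exact_mod_cast (by linarith : (N.Pre p t : ℤ) ≤ M p)
      -- fire t, recurse
      set M1 : P → ℕ := fun p => M p + N.Post p (t : T) - N.Pre p (t : T) with hM1
      have hM1' : ∀ p, (M1 p : ℤ) = M p + N.C p (t : T) := by
        intro p
        have hle : N.Pre p t ≤ M p + N.Post p t :=
          le_trans (henabled p) (Nat.le_add_right _ _)
        simp only [hM1]
        rw [Nat.cast_sub hle]; push_cast [PetriNet.C]; ring
      set z' : T → ℕ := Function.update z (t : T) (z (t : T) - 1) with hz'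
      have hz'eq : ∀ u, (z' u : ℤ) = z u - (if u = (t : T) then 1 else 0) := by
        intro u
        by_cases h : u = (t : T)
        · subst h
          simp only [hz', Function.update_self, if_pos rfl]
          rw [Nat.cast_sub t.2]
          norm_num
        · simp [hz', Function.update_of_ne h, h]
      have hsum' : ∑ u, z' u = n - 1 := by
        have h1 : ∑ u, z' u + 1 = ∑ u, z u := by
          have : ∀ u ∈ Finset.univ, z' u + (if u = (t : T) then 1 else 0) = z u := by
            intro u _
            by_cases h : u = (t : T)
            · subst h; simp [hz', Function.update_self, Nat.sub_add_cancel t.2]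
            · simp [hz', Function.update_of_ne h, h]
          calc ∑ u, z' u + 1
              = ∑ u, (z' u + if u = (t : T) then 1 else 0) := by
                rw [Finset.sum_add_distrib]; simp
            _ = ∑ u, z u := Finset.sum_congr rfl this
        omega
      have hlt : n - 1 < n := by
        have : 0 < n := by
          rw [← hn]
          exact lt_of_lt_of_le ht0' (Finset.single_le_sum (fun u _ => Nat.zero_le _)
            (Finset.mem_univ t0))
        omega
      have hz'TI : ∀ u, 0 < z' u → u ∈ TI := by
        intro u hu
        apply hzTI
        by_cases h : u = (t : T)
        · subst h; exact t.2
        · simpa [hz', Function.update_of_ne h] using hu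
      have hM'rec : ∀ p, (M' p : ℤ) = M1 p + ∑ u, N.C p u * z' u := by
        intro p
        rw [hM1' p, hM p]
        have : ∀ u, N.C p u * (z' u : ℤ)
            = N.C p u * z u - N.C p u * (if u = (t : T) then 1 else 0) := by
          intro u; rw [hz'eq u]; ring
        simp only [this, Finset.sum_sub_distrib, mul_ite, mul_one, mul_zero,
          Finset.sum_ite_eq' Finset.univ (t : T) (fun u => N.C p u),
          Finset.mem_univ, if_true]
        ring
      obtain ⟨σ', hσTI, hσcount, hσfire⟩ :=
        ih (n - 1) hlt z' hsum' hz'TI M1 M' hM'rec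
      refine ⟨(t : T) :: σ', ?_, ?_, ?_⟩
      · intro u hu
        rcases List.mem_cons.mp hu with h | h
        · subst h; exact htTI
        · exact hσTI u h
      · intro u
        rw [List.count_cons, hσcount u]
        by_cases h : u = (t : T)
        · subst h; simp [hz', Function.update_self]; omega
        · simp [hz', Function.update_of_ne h, h, Ne.symm h]
      · exact PetriNet.Fires.cons henabled (fun p => rfl) hσfire

/-- Existence of a minimal explanation below a given explanation. -/
lemma exists_min_expl [Fintype T] [DecidableEq T] {N : PetriNet P T} {TI : Set T}
    {M : P → ℕ} {t : T} {σ0 : List T} (h0 : σ0 ∈ N.Expl TI M t) :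
    ∃ σm ∈ N.ExplMin TI M t, ∀ u, σm.count u ≤ σ0.count u := by
  classical
  set A : Set ℕ := {n | ∃ σ ∈ N.Expl TI M t,
    (∀ u, σ.count u ≤ σ0.count u) ∧ ∑ u, σ.count u = n} with hA
  have hAne : A.Nonempty := ⟨∑ u, σ0.count u, σ0, h0, fun u => le_refl _, rfl⟩
  obtain ⟨σm, hσm, hle, hsum⟩ := Nat.sInf_mem hAne
  refine ⟨σm, ⟨hσm, ?_⟩, hle⟩
  rintro ⟨σ', hσ', hle', u0, hne⟩
  have hle0 : ∀ u, σ'.count u ≤ σ0.count u := fun u => le_trans (hle' u) (hle u)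
  have hmem : (∑ u, σ'.count u) ∈ A := ⟨σ', hσ', hle0, rfl⟩
  have hlt : ∑ u, σ'.count u < ∑ u, σm.count u := by
    apply Finset.sum_lt_sum (fun u _ => hle' u)
    exact ⟨u0, Finset.mem_univ u0, lt_of_le_of_ne (hle' u0) hne⟩
  have := Nat.sInf_le hmem
  omega

end PetriNetAux

open PetriNet PetriNetAux in
/-- A marking is reachable iff it is in the implicit reach of
some minimax basis marking. -/
theorem statement3 {P T : Type} [Fintype T] [DecidableEq T]
    (N : PetriNet P T) (M0 : P → ℕ) (TE TI : Set T)
    (hbp : N.IsBasisPartition TE TI) (M : P → ℕ) :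
    M ∈ N.Reach M0 ↔
      ∃ Mb : P → ℕ, N.Minimax TE TI M0 Mb ∧ M ∈ N.ReachI TI Mb := by
  obtain ⟨hpart, hac⟩ := hbp
  constructor
  · -- forward direction: induction over the firing sequence (from the right)
    rintro ⟨σ, hσ⟩
    induction σ using List.reverseRecOn generalizing M with
    | nil =>
      cases hσ
      exact ⟨M0, Minimax.base, [], by simp, PetriNet.Fires.nil M0⟩
    | append_singleton σ t ih =>
      obtain ⟨Mmid, h1, h2⟩ := fires_append_iff.mp hσ
      obtain ⟨Mb, hMb, σI, hσITI, hσIfire⟩ := ih Mmid h1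
      -- h2 : single step Mmid [t] M
      obtain ⟨he, hm, hM⟩ : N.Enabled Mmid t ∧
          (∀ p, M p = Mmid p + N.Post p t - N.Pre p t) ∧ True := by
        cases h2 with
        | cons he hm h3 => cases h3; exact ⟨he, hm, trivial⟩
      have hMint : ∀ p, (M p : ℤ) = Mmid p + N.C p t := by
        intro p
        have hle : N.Pre p t ≤ Mmid p + N.Post p t :=
          le_trans (he p) (Nat.le_add_right _ _)
        rw [hm p, Nat.cast_sub hle]; push_cast [PetriNet.C]; ring
      by_cases htI : t ∈ TI
      · -- implicit transition: extend the implicit sequence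
        refine ⟨Mb, hMb, σI ++ [t], ?_, fires_append hσIfire h2⟩
        intro u hu
        rcases List.mem_append.mp hu with h | h
        · exact hσITI u h
        · simp at h; subst h; exact htI
      · -- explicit transition
        have htE : t ∈ TE := (hpart t).mpr htI
        have hexpl : σI ∈ N.Expl TI Mb t := ⟨hσITI, Mmid, hσIfire, he⟩
        obtain ⟨σm, hσmMin, hσmle⟩ := exists_min_expl hexpl
        obtain ⟨hσmTI, M1, hσmfire, hM1ge⟩ := hσmMin.1
        -- the new basis marking
        set Mb' : P → ℕ := fun p => M1 p + N.Post p t - N.Pre p t with hMb'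
        have hMb'int : ∀ p, (Mb' p : ℤ) = M1 p + N.C p t := by
          intro p
          have hle : N.Pre p t ≤ M1 p + N.Post p t :=
            le_trans (hM1ge p) (Nat.le_add_right _ _)
          simp only [hMb']
          rw [Nat.cast_sub hle]; push_cast [PetriNet.C]; ring
        have hM1int : ∀ p, (M1 p : ℤ) = Mb p + ∑ u, N.C p u * σm.count u :=
          fires_marking_eq hσmfire
        have hMb'min : N.Minimax TE TI M0 Mb' := by
          refine Minimax.step hMb htE
            (Or.inl ⟨σm, hσmMin, fun u => rfl⟩) ?_
          intro p
          rw [hMb'int p, hM1int p]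
        -- residual firing vector
        set z : T → ℕ := fun u => σI.count u - σm.count u with hzdef
        have hzint : ∀ u, (z u : ℤ) = σI.count u - σm.count u := by
          intro u; simp only [hzdef]; rw [Nat.cast_sub (hσmle u)]
        have hzTI : ∀ u, 0 < z u → u ∈ TI := by
          intro u hu
          apply hσITI
          have : 0 < σI.count u := by simp only [hzdef] at hu; omega
          exact List.count_pos_iff.mp this
        have hMmidint : ∀ p, (Mmid p : ℤ) = Mb p + ∑ u, N.C p u * σI.count u :=
          fires_marking_eq hσIfire
        have hMrec : ∀ p, (M p : ℤ) = Mb' p + ∑ u, N.C p u * z u := by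
          intro p
          rw [hMint p, hMmidint p, hMb'int p, hM1int p]
          have : ∀ u, N.C p u * (z u : ℤ)
              = N.C p u * σI.count u - N.C p u * σm.count u := by
            intro u; rw [hzint u]; ring
          simp only [this, Finset.sum_sub_distrib]
          ring
        obtain ⟨σ'', hσ''TI, _, hσ''fire⟩ :=
          acyclic_fire hac (∑ u, z u) z rfl hzTI Mb' M hMrec
        exact ⟨Mb', hMb'min, σ'', hσ''TI, hσ''fire⟩
  · -- backward direction
    rintro ⟨Mb, hMb, σI, hσITI, hσIfire⟩
    suffices h : Mb ∈ N.Reach M0 by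
      obtain ⟨σ0, hσ0⟩ := h
      exact ⟨σ0 ++ σI, fires_append hσ0 hσIfire⟩
    clear hσIfire hσITI σI M
    induction hMb with
    | base => exact ⟨[], PetriNet.Fires.nil M0⟩
    | @step Mc M' t y hMc htE hy hM' ih =>
      obtain ⟨σ0, hσ0⟩ := ih
      have hexpl : ∃ σ, σ ∈ N.Expl TI Mc t ∧ ∀ u, σ.count u = y u := by
        rcases hy with ⟨σ, hσ, hc⟩ | ⟨σ, hσ, hc⟩
        · exact ⟨σ, hσ.1, hc⟩
        · exact ⟨σ, hσ.1, hc⟩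
      obtain ⟨σ, ⟨hσTI, M1, hσfire, hM1ge⟩, hcount⟩ := hexpl
      set M2 : P → ℕ := fun p => M1 p + N.Post p t - N.Pre p t with hM2
      have hstep : N.Fires M1 [t] M2 :=
        PetriNet.Fires.cons hM1ge (fun p => rfl) (PetriNet.Fires.nil M2)
      have hM'eq : M' = M2 := by
        funext p
        have hle : N.Pre p t ≤ M1 p + N.Post p t :=
          le_trans (hM1ge p) (Nat.le_add_right _ _)
        have h1 : (M2 p : ℤ) = M1 p + N.C p t := by
          simp only [hM2]
          rw [Nat.cast_sub hle]; push_cast [PetriNet.C]; ring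
        have h2 : (M1 p : ℤ) = Mc p + ∑ u, N.C p u * σ.count u :=
          fires_marking_eq hσfire p
        have h3 : (M' p : ℤ) = (M2 p : ℤ) := by
          rw [hM' p, h1, h2]
          simp only [hcount]
        exact_mod_cast h3
      rw [hM'eq]
      exact ⟨σ0 ++ (σ ++ [t]), fires_append hσ0 (fires_append hσfire hstep)⟩
end

section
/- Let ⟨N, M0⟩ be a marked Petri net with a basis partition π = (T_E, T_I), let the set of final markings be given by a single GMEC, M_F = { M : P → ℕ | wᵀ·M ≤ k } for some w ∈ ℤ^P and k ∈ ℤ, and let M_b ∈ M_BM be a minimax basis marking. Then M_b belongs to the set of i-coreachable minimax basis markings M_ico = { M_b ∈ M_BM | R_I(M_b) ∩ M_F ≠ ∅ } if and only if there exist y_I ∈ ℕ^{T_I} and M : P → ℕ such that M = M_b + C_I·y_I (as integer vectors) and wᵀ·M ≤ k. -/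
open scoped BigOperators

set_option linter.unusedSectionVars false

namespace Stmt4Aux

open PetriNet

variable {P T : Type} [Fintype P] [Fintype T] [DecidableEq T]

lemma fires_state_eq (N : PetriNet P T) {M M' : P → ℕ} {σ : List T}
    (h : N.Fires M σ M') :
    ∀ p, (M' p : ℤ) = (M p : ℤ) + ∑ t, N.C p t * (σ.count t : ℤ) := by
  induction h with
  | nil M => simp
  | @cons M M' M'' t σ hen hstep _ ih =>
    intro p
    have h1 : (M' p : ℤ) = (M p : ℤ) + N.C p t := by
      have h2 := hstep p; have h3 := hen p
      simp only [PetriNet.C]; omega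
    have hcount : ∀ u : T, ((t :: σ).count u : ℤ) =
        (σ.count u : ℤ) + if u = t then 1 else 0 := by
      intro u
      rw [List.count_cons]
      by_cases h : u = t
      · simp [h]
      · have h2 : ¬ (t == u) = true := by simp [beq_iff_eq]; exact fun hh => h hh.symm
        simp [h, h2]
    calc (M'' p : ℤ) = (M' p : ℤ) + ∑ u, N.C p u * (σ.count u : ℤ) := ih p
      _ = (M p : ℤ) + ∑ u, N.C p u * (((t :: σ).count u : ℤ)) := by
          rw [h1]
          have : ∑ u, N.C p u * (((t :: σ).count u : ℤ)) =
              (∑ u, N.C p u * (σ.count u : ℤ)) + N.C p t := by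
            simp_rw [hcount, mul_add, Finset.sum_add_distrib, mul_ite, mul_one, mul_zero,
              Finset.sum_ite_eq' Finset.univ t (N.C p), Finset.mem_univ, if_true]
          rw [this]; ring
      _ = (M p : ℤ) + ∑ u, N.C p u * (((t :: σ).count u : ℤ)) := rfl

lemma exists_enabled (N : PetriNet P T) (TI : Set T) (hac : N.AcyclicOn TI)
    (Mb : P → ℕ) (y : T → ℕ) (hTI : ∀ t ∉ TI, y t = 0)
    (hy : ∃ t, y t ≠ 0)
    (hpos : ∀ p, 0 ≤ (Mb p : ℤ) + ∑ t, N.C p t * (y t : ℤ)) :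
    ∃ t ∈ TI, y t ≠ 0 ∧ N.Enabled Mb t := by
  set r : T → T → Prop := fun a b => Relation.TransGen (N.Arc TI) (Sum.inr a) (Sum.inr b)
    with hr
  haveI : IsTrans T r := ⟨fun _ _ _ hab hbc => hab.trans hbc⟩
  haveI : IsIrrefl T r := ⟨fun a h => hac _ h⟩
  have hwf : WellFounded r := Finite.wellFounded_of_trans_of_irrefl r
  set s : Set T := {t | y t ≠ 0} with hs
  have hsne : s.Nonempty := hy
  set t := hwf.min s hsne with ht
  have hts : t ∈ s := hwf.min_mem s hsne
  have htTI : t ∈ TI := by by_contra h; exact hts (hTI t h)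
  refine ⟨t, htTI, hts, ?_⟩
  intro p
  by_cases hP : N.Pre p t = 0
  · omega
  have harc1 : N.Arc TI (Sum.inl p) (Sum.inr t) := ⟨htTI, Nat.pos_of_ne_zero hP⟩
  -- every u with y u ≠ 0 has Post p u = 0
  have hpost : ∀ u : T, y u ≠ 0 → N.Post p u = 0 := by
    intro u hu
    by_contra hPo
    have huTI : u ∈ TI := by by_contra h; exact hu (hTI u h)
    have harc2 : N.Arc TI (Sum.inr u) (Sum.inl p) := ⟨huTI, Nat.pos_of_ne_zero hPo⟩
    have hru : r u t := Relation.TransGen.head harc2 (Relation.TransGen.single harc1)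
    by_cases hut : u = t
    · exact hac _ (hut ▸ hru)
    · exact hwf.not_lt_min s hu hru
  -- bound the sum
  have hbound : ∑ u, N.C p u * (y u : ℤ) ≤ -(N.Pre p t : ℤ) := by
    have h1 : ∀ u ∈ Finset.univ (α := T),
        N.C p u * (y u : ℤ) ≤ if u = t then -(N.Pre p t : ℤ) else 0 := by
      intro u _
      by_cases hut : u = t
      · subst hut
        have hyu : y t ≠ 0 := hts
        have hpo := hpost t hyu
        have hy1 : (1 : ℤ) ≤ (y t : ℤ) := by exact_mod_cast Nat.one_le_iff_ne_zero.mpr hyu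
        simp only [PetriNet.C, hpo, Nat.cast_zero, zero_sub, eq_self_iff_true, if_true]
        nlinarith [Int.ofNat_nonneg (N.Pre p t)]
      · rw [if_neg hut]
        by_cases hu : y u = 0
        · simp [hu]
        · have hpo := hpost u hu
          simp only [PetriNet.C, hpo, Nat.cast_zero, zero_sub]
          nlinarith [Int.ofNat_nonneg (N.Pre p u), Int.ofNat_nonneg (y u)]
    calc ∑ u, N.C p u * (y u : ℤ) ≤ ∑ u : T, if u = t then -(N.Pre p t : ℤ) else 0 :=
          Finset.sum_le_sum h1
      _ = -(N.Pre p t : ℤ) := by simp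
  have := hpos p
  omega

lemma reach_of_vec (N : PetriNet P T) (TI : Set T) (hac : N.AcyclicOn TI) :
    ∀ (n : ℕ) (Mb M : P → ℕ) (y : T → ℕ), (∑ t, y t) = n → (∀ t ∉ TI, y t = 0) →
    (∀ p, (M p : ℤ) = (Mb p : ℤ) + ∑ t, N.C p t * (y t : ℤ)) →
    ∃ σ : List T, (∀ u ∈ σ, u ∈ TI) ∧ N.Fires Mb σ M := by
  intro n
  induction n with
  | zero =>
    intro Mb M y hsum _ heq
    have hz : ∀ t, y t = 0 := by
      intro t
      exact Finset.sum_eq_zero_iff.mp hsum t (Finset.mem_univ t)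
    have : M = Mb := by
      funext p
      have := heq p
      simp [hz] at this
      exact_mod_cast this
    refine ⟨[], by simp, ?_⟩
    rw [this]
    exact Fires.nil Mb
  | succ n ih =>
    intro Mb M y hsum hTI heq
    have hy : ∃ t, y t ≠ 0 := by
      by_contra h
      push_neg at h
      simp [h] at hsum
    have hpos : ∀ p, 0 ≤ (Mb p : ℤ) + ∑ t, N.C p t * (y t : ℤ) := by
      intro p; rw [← heq p]; positivity
    obtain ⟨t, htTI, hyt, hen⟩ := exists_enabled N TI hac Mb y hTI hy hpos
    set Mb' : P → ℕ := fun p => Mb p + N.Post p t - N.Pre p t with hMb'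
    set y' : T → ℕ := fun u => if u = t then y t - 1 else y u with hy'
    have hycast : ∀ u, (y' u : ℤ) = (y u : ℤ) - if u = t then 1 else 0 := by
      intro u
      simp only [hy']
      split
      · subst ‹u = t›; omega
      · simp
    have hsum' : ∑ u, y' u = n := by
      have : ∑ u, y u = ∑ u, (y' u + if u = t then 1 else 0) := by
        apply Finset.sum_congr rfl
        intro u _
        simp only [hy']
        split
        · subst ‹u = t›; omega
        · simp
      rw [this, Finset.sum_add_distrib] at hsum
      simp at hsum
      omega
    have hTI' : ∀ u ∉ TI, y' u = 0 := by
      intro u hu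
      simp only [hy']
      split
      · subst ‹u = t›; exact absurd htTI hu
      · exact hTI u hu
    have heq' : ∀ p, (M p : ℤ) = (Mb' p : ℤ) + ∑ u, N.C p u * (y' u : ℤ) := by
      intro p
      have h1 : (Mb' p : ℤ) = (Mb p : ℤ) + N.C p t := by
        simp only [hMb', PetriNet.C]
        have := hen p
        omega
      have h2 : ∑ u, N.C p u * (y' u : ℤ) =
          (∑ u, N.C p u * (y u : ℤ)) - N.C p t := by
        simp_rw [hycast, mul_sub, Finset.sum_sub_distrib, mul_ite, mul_one, mul_zero,
          Finset.sum_ite_eq' Finset.univ t (N.C p), Finset.mem_univ, if_true]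
      rw [h1, h2, heq p]; ring
    obtain ⟨σ, hσTI, hσ⟩ := ih Mb' M y' hsum' hTI' heq'
    refine ⟨t :: σ, ?_, Fires.cons hen (fun p => rfl) hσ⟩
    intro u hu
    rcases List.mem_cons.mp hu with h | h
    · exact h ▸ htTI
    · exact hσTI u h

end Stmt4Aux

open PetriNet in
/-- For a set of final markings given by a single GMEC
`(w, k)`, a minimax basis marking `M_b` is i-coreachable iff the integer
constraint set `M = M_b + C_I·y_I`, `wᵀ·M ≤ k` is feasible. -/
theorem statement4 {P T : Type} [Fintype P] [Fintype T] [DecidableEq T]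
    (N : PetriNet P T) (M0 : P → ℕ) (TE TI : Set T)
    (hbp : N.IsBasisPartition TE TI)
    (w : P → ℤ) (k : ℤ)
    (Mb : P → ℕ) (hMb : N.Minimax TE TI M0 Mb) :
    (N.ReachI TI Mb ∩ {M : P → ℕ | ∑ p, w p * (M p : ℤ) ≤ k}).Nonempty ↔
      ∃ (yI : T → ℕ) (M : P → ℕ), (∀ t ∉ TI, yI t = 0) ∧
        (∀ p, (M p : ℤ) = (Mb p : ℤ) + ∑ t, N.C p t * yI t) ∧
        ∑ p, w p * (M p : ℤ) ≤ k := by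
  obtain ⟨hpart, hac⟩ := hbp
  constructor
  · rintro ⟨M, ⟨σ, hσTI, hfire⟩, hM⟩
    refine ⟨fun u => σ.count u, M, ?_, ?_, hM⟩
    · intro t ht
      apply List.count_eq_zero_of_not_mem
      exact fun hmem => ht (hσTI t hmem)
    · exact Stmt4Aux.fires_state_eq N hfire
  · rintro ⟨yI, M, hyTI, heq, hM⟩
    obtain ⟨σ, hσTI, hfire⟩ :=
      Stmt4Aux.reach_of_vec N TI hac (∑ t, yI t) Mb M yI rfl hyTI heq
    exact ⟨M, ⟨σ, hσTI, hfire⟩, hM⟩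
end

section
/- Let G = (N, M0, M_F) be a plant with a basis partition π = (T_E, T_I). Then the minimax-BRG of G is unobstructed if and only if every minimax basis marking M_b ∈ M_BM is nonblocking. -/
open scoped BigOperators

section Aux
open PetriNet

variable {P T : Type} [Fintype T] [DecidableEq T] {N : PetriNet P T} {TI : Set T}

lemma fires_append {τ : List T} {M'' : P → ℕ} {σ : List T} {M M' : P → ℕ}
    (h1 : N.Fires M σ M') (h2 : N.Fires M' τ M'') : N.Fires M (σ ++ τ) M'' := by
  induction σ generalizing M with
  | nil => cases h1; exact h2
  | cons t σ ih =>
    cases h1 with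
    | cons he hm hf => exact .cons he hm (ih hf)

lemma fires_split {σ τ : List T} {M M'' : P → ℕ}
    (h : N.Fires M (σ ++ τ) M'') : ∃ M', N.Fires M σ M' ∧ N.Fires M' τ M'' := by
  induction σ generalizing M with
  | nil => exact ⟨M, .nil M, h⟩
  | cons t σ ih =>
    cases h with
    | cons he hm hf =>
      obtain ⟨Mmid, h1, h2⟩ := ih hf
      exact ⟨Mmid, .cons he hm h1, h2⟩

lemma fires_marking {σ : List T} {M M' : P → ℕ} (h : N.Fires M σ M') :
    ∀ p, (M' p : ℤ) = M p + ∑ u, N.C p u * σ.count u := by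
  induction h with
  | nil M => intro p; simp
  | @cons M M' M'' t σ he hm hf ih =>
    intro p
    have h1 : (M' p : ℤ) = M p + N.C p t := by
      rw [hm p, Nat.cast_sub (le_trans (he p) (Nat.le_add_right _ _))]
      push_cast [PetriNet.C]; ring
    rw [ih p, h1]
    have hc : ∀ u : T, (((t :: σ).count u : ℕ) : ℤ)
        = (σ.count u : ℤ) + if u = t then 1 else 0 := by
      intro u
      rw [List.count_cons]
      by_cases hu : u = t
      · simp [hu]
      · simp [hu, Ne.symm hu]
    have hsum : ∑ u, N.C p u * (((t :: σ).count u : ℕ) : ℤ)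
        = (∑ u, N.C p u * (σ.count u : ℤ)) + N.C p t := by
      have : ∀ u ∈ Finset.univ, N.C p u * (((t :: σ).count u : ℕ) : ℤ)
          = N.C p u * (σ.count u : ℤ) + if u = t then N.C p u else 0 := by
        intro u _
        rw [hc u]
        by_cases hut : u = t <;> simp [hut] <;> ring
      rw [Finset.sum_congr rfl this, Finset.sum_add_distrib,
        Finset.sum_ite_eq' Finset.univ t (fun u => N.C p u)]
      simp
    rw [hsum]; ring

lemma length_eq_sum_count (l : List T) : l.length = ∑ u, l.count u := by
  induction l with
  | nil => simp
  | cons t l ih =>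
    simp only [List.length_cons, List.count_cons, ih]
    rw [Finset.sum_add_distrib]
    simp [Finset.sum_ite_eq' Finset.univ t (fun _ => 1)]

lemma acyclic_fire (hac : N.AcyclicOn TI) :
    ∀ (n : ℕ) (y : T → ℕ) (M M' : P → ℕ), (∑ u, y u) = n →
      (∀ u, y u ≠ 0 → u ∈ TI) →
      (∀ p, (M' p : ℤ) = M p + ∑ u, N.C p u * y u) →
      ∃ τ : List T, (∀ u ∈ τ, u ∈ TI) ∧ N.Fires M τ M' ∧ ∀ u, τ.count u = y u := by
  intro n
  induction n using Nat.strong_induction_on with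
  | _ n ih =>
  intro y M M' hsum hsupp heq
  by_cases h0 : ∀ u, y u = 0
  · have hM : M' = M := by
      funext p
      have := heq p
      simp [h0] at this
      exact_mod_cast this
    exact ⟨[], by simp, by rw [hM]; exact .nil M, fun u => by simp [h0 u]⟩
  · push_neg at h0
    obtain ⟨t0, ht0⟩ := h0
    have hwf : WellFounded (fun u v : T =>
        Relation.TransGen (N.Arc TI) (Sum.inr u) (Sum.inr v)) := by
      haveI : IsTrans T (fun u v : T =>
          Relation.TransGen (N.Arc TI) (Sum.inr u) (Sum.inr v)) :=
        ⟨fun _ _ _ hab hbc => hab.trans hbc⟩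
      haveI : IsIrrefl T (fun u v : T =>
          Relation.TransGen (N.Arc TI) (Sum.inr u) (Sum.inr v)) :=
        ⟨fun a ha => hac _ ha⟩
      exact Finite.wellFounded_of_trans_of_irrefl _
    obtain ⟨t, htS, htmin⟩ := hwf.has_min {u | y u ≠ 0} ⟨t0, ht0⟩
    have htI : t ∈ TI := hsupp t htS
    have hen : N.Enabled M t := by
      intro p
      by_contra hlt
      push_neg at hlt
      have hpre : 0 < N.Pre p t := lt_of_le_of_lt (Nat.zero_le _) hlt
      have harc2 : N.Arc TI (Sum.inl p) (Sum.inr t) := ⟨htI, hpre⟩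
      have hpost : ∀ u, y u ≠ 0 → N.Post p u = 0 := by
        intro u hu
        by_contra hpu
        have harc1 : N.Arc TI (Sum.inr u) (Sum.inl p) := ⟨hsupp u hu, Nat.pos_of_ne_zero hpu⟩
        by_cases hut : u = t
        · subst hut
          exact hac (Sum.inl p) (Relation.TransGen.head harc2 (Relation.TransGen.single harc1))
        · exact htmin u hu (Relation.TransGen.head harc1 (Relation.TransGen.single harc2))
      have hbound : ∑ u, N.C p u * (y u : ℤ)
          ≤ ∑ u, (if u = t then -(N.Pre p t : ℤ) else 0) := by
        apply Finset.sum_le_sum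
        intro u _
        by_cases hut : u = t
        · rw [if_pos hut]
          subst hut
          have hP : N.Post p u = 0 := hpost u htS
          have h1 : N.C p u = -(N.Pre p u : ℤ) := by simp [PetriNet.C, hP]
          rw [h1]
          have h2 : 1 ≤ (y u : ℤ) := by exact_mod_cast Nat.one_le_iff_ne_zero.mpr htS
          have h3 : (N.Pre p u : ℤ) * 1 ≤ (N.Pre p u : ℤ) * (y u : ℤ) :=
            mul_le_mul_of_nonneg_left h2 (Nat.cast_nonneg _)
          linarith
        · rw [if_neg hut]
          by_cases hu : y u = 0
          · simp [hu]
          · have hP : N.Post p u = 0 := hpost u hu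
            have h1 : N.C p u = -(N.Pre p u : ℤ) := by simp [PetriNet.C, hP]
            rw [h1]
            have h2 : (0:ℤ) ≤ (N.Pre p u : ℤ) * (y u : ℤ) :=
              mul_nonneg (Nat.cast_nonneg _) (Nat.cast_nonneg _)
            linarith
      rw [Finset.sum_ite_eq' Finset.univ t (fun _ => -(N.Pre p t : ℤ))] at hbound
      simp only [Finset.mem_univ, if_pos] at hbound
      have h1 := heq p
      have h2 : (0 : ℤ) ≤ M' p := Nat.cast_nonneg _
      have h3 : (M p : ℤ) < N.Pre p t := by exact_mod_cast hlt
      omega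
    set M1 : P → ℕ := fun p => M p + N.Post p t - N.Pre p t with hM1
    have hM1eq : ∀ p, (M1 p : ℤ) = M p + N.C p t := by
      intro p
      rw [hM1]
      simp only
      rw [Nat.cast_sub (le_trans (hen p) (Nat.le_add_right _ _))]
      push_cast [PetriNet.C]; ring
    set y1 : T → ℕ := Function.update y t (y t - 1) with hy1
    have hyt : 1 ≤ y t := Nat.one_le_iff_ne_zero.mpr htS
    have hsum1 : ∑ u, y1 u = n - 1 := by
      rw [hy1, Finset.sum_update_of_mem (Finset.mem_univ t)]
      have : ∑ u, y u = y t + ∑ u ∈ Finset.univ \ {t}, y u := by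
        rw [← Finset.sum_eq_add_sum_sdiff_singleton_of_mem (Finset.mem_univ t)]
      omega
    have hnpos : 1 ≤ n := by
      have : y t0 ≤ ∑ u, y u := Finset.single_le_sum (fun u _ => Nat.zero_le _) (Finset.mem_univ t0)
      omega
    have hsupp1 : ∀ u, y1 u ≠ 0 → u ∈ TI := by
      intro u hu
      by_cases hut : u = t
      · subst hut; exact htI
      · rw [hy1, Function.update_of_ne hut] at hu
        exact hsupp u hu
    have hcast1 : ∀ u, (y1 u : ℤ) = (y u : ℤ) - if u = t then 1 else 0 := by
      intro u
      by_cases hut : u = t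
      · subst hut
        rw [hy1, Function.update_self, if_pos rfl]
        push_cast [Nat.cast_sub hyt]
        ring
      · rw [hy1, Function.update_of_ne hut, if_neg hut]; ring
    have heq1 : ∀ p, (M' p : ℤ) = M1 p + ∑ u, N.C p u * y1 u := by
      intro p
      have hsub : ∑ u, N.C p u * (y1 u : ℤ)
          = (∑ u, N.C p u * (y u : ℤ)) - N.C p t := by
        have : ∀ u ∈ Finset.univ, N.C p u * (y1 u : ℤ)
            = N.C p u * (y u : ℤ) - if u = t then N.C p u else 0 := by
          intro u _
          rw [hcast1 u]
          by_cases hut : u = t <;> simp [hut] <;> ring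
        rw [Finset.sum_congr rfl this, Finset.sum_sub_distrib,
          Finset.sum_ite_eq' Finset.univ t (fun u => N.C p u)]
        simp
      rw [heq p, hM1eq p, hsub]
      ring
    obtain ⟨τ1, hτ1I, hfτ1, hτ1c⟩ := ih (n - 1) (by omega) y1 M1 M' hsum1 hsupp1 heq1
    refine ⟨t :: τ1, ?_, .cons hen (fun p => rfl) hfτ1, ?_⟩
    · intro u hu
      rcases List.mem_cons.mp hu with rfl | hu
      · exact htI
      · exact hτ1I u hu
    · intro u
      rw [List.count_cons, hτ1c u]
      by_cases hut : u = t
      · subst hut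
        rw [hy1, Function.update_self]
        simp; omega
      · rw [hy1, Function.update_of_ne hut]
        simp [Ne.symm hut, hut]

end Aux

section Aux2
open PetriNet

variable {P T : Type} [Fintype T] [DecidableEq T] {N : PetriNet P T} {TE TI : Set T}

lemma split_list (TI : Set T) : ∀ σ : List T,
    (∀ u ∈ σ, u ∈ TI) ∨
    ∃ σI t σr, σ = σI ++ t :: σr ∧ (∀ u ∈ σI, u ∈ TI) ∧ t ∉ TI := by
  intro σ
  induction σ with
  | nil => left; simp
  | cons t σ ih =>
    by_cases ht : t ∈ TI
    · rcases ih with h | ⟨σI, v, σr, rfl, hI, hv⟩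
      · left
        intro u hu
        rcases List.mem_cons.mp hu with rfl | hu
        · exact ht
        · exact h u hu
      · right
        refine ⟨t :: σI, v, σr, rfl, ?_, hv⟩
        intro u hu
        rcases List.mem_cons.mp hu with rfl | hu
        · exact ht
        · exact hI u hu
    · right
      exact ⟨[], t, σ, rfl, by simp, ht⟩

lemma exists_min_expl {Mb : P → ℕ} {t : T} {σ0 : List T}
    (h : σ0 ∈ N.Expl TI Mb t) :
    ∃ σs, σs ∈ N.ExplMin TI Mb t ∧ ∀ u, σs.count u ≤ σ0.count u := by
  set Good : Set (List T) := {σ' | σ' ∈ N.Expl TI Mb t ∧ ∀ u, σ'.count u ≤ σ0.count u}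
    with hGood
  have hne : (List.length '' Good).Nonempty := ⟨σ0.length, σ0, ⟨h, fun u => le_refl _⟩, rfl⟩
  obtain ⟨m, ⟨σs, hσsG, hm⟩, hmin⟩ :=
    (wellFounded_lt : WellFounded ((· < ·) : ℕ → ℕ → Prop)).has_min
      (List.length '' Good) hne
  subst hm
  refine ⟨σs, ⟨hσsG.1, ?_⟩, hσsG.2⟩
  rintro ⟨σ'', h'', hle, u0, hne0⟩
  have hG'' : σ'' ∈ Good := ⟨h'', fun u => le_trans (hle u) (hσsG.2 u)⟩
  have hlt : σ''.length < σs.length := by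
    rw [length_eq_sum_count, length_eq_sum_count]
    exact Finset.sum_lt_sum (fun u _ => hle u)
      ⟨u0, Finset.mem_univ u0, lt_of_le_of_ne (hle u0) hne0⟩
  exact hmin σ''.length ⟨σ'', hG'', rfl⟩ (by omega)

lemma brgstep_fires {M1 M2 : P → ℕ}
    (h : N.BrgStep TE TI M1 M2) : ∃ σ, N.Fires M1 σ M2 := by
  obtain ⟨t, htE, y, hy, heq⟩ := h
  have hexp : ∃ σ, σ ∈ N.Expl TI M1 t ∧ ∀ u, σ.count u = y u := by
    rcases hy with hy | hy
    · obtain ⟨σ, hσ, hc⟩ := hy; exact ⟨σ, hσ.1, hc⟩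
    · obtain ⟨σ, hσ, hc⟩ := hy; exact ⟨σ, hσ.1, hc⟩
  obtain ⟨σ, ⟨hI, M', hf, hen⟩, hc⟩ := hexp
  set M2' : P → ℕ := fun p => M' p + N.Post p t - N.Pre p t with hM2'
  have hf2 : N.Fires M1 (σ ++ [t]) M2' :=
    fires_append hf (.cons hen (fun p => rfl) (.nil _))
  have hMeq : M2' = M2 := by
    funext p
    have h1 := fires_marking hf p
    have h2 : (M2' p : ℤ) = M' p + N.C p t := by
      show ((M' p + N.Post p t - N.Pre p t : ℕ) : ℤ) = _
      rw [Nat.cast_sub (le_trans (hen p) (Nat.le_add_right _ _))]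
      push_cast [PetriNet.C]
      try ring
    have h3 := heq p
    have : (M2' p : ℤ) = M2 p := by
      rw [h2, h1, h3]
      have : ∀ u, ((σ.count u : ℕ) : ℤ) = ((y u : ℕ) : ℤ) := fun u => by
        exact_mod_cast congrArg (Nat.cast : ℕ → ℤ) (hc u)
      rw [Finset.sum_congr rfl (fun u _ => by rw [this u])]
    exact_mod_cast this
  exact ⟨σ ++ [t], hMeq ▸ hf2⟩

lemma steps_fires {Ma Mb : P → ℕ}
    (h : Relation.ReflTransGen (N.BrgStep TE TI) Ma Mb) : ∃ σ, N.Fires Ma σ Mb := by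
  induction h with
  | refl => exact ⟨[], .nil _⟩
  | tail _ hbc ih =>
    obtain ⟨σ1, h1⟩ := ih
    obtain ⟨σ2, h2⟩ := brgstep_fires hbc
    exact ⟨σ1 ++ σ2, fires_append h1 h2⟩

lemma key (hbp : N.IsBasisPartition TE TI) (M0 : P → ℕ) (MF : Set (P → ℕ)) :
    ∀ n : ℕ, ∀ σ : List T, σ.length ≤ n → ∀ Mb M Mf : P → ℕ,
      N.Minimax TE TI M0 Mb →
      (∃ τ, (∀ u ∈ τ, u ∈ TI) ∧ N.Fires Mb τ M) →
      N.Fires M σ Mf → Mf ∈ MF →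
      ∃ Mb', Relation.ReflTransGen (N.BrgStep TE TI) Mb Mb' ∧
        N.Minimax TE TI M0 Mb' ∧ (N.ReachI TI Mb' ∩ MF).Nonempty := by
  intro n
  induction n with
  | zero =>
    rintro σ hlen Mb M Mf hmm ⟨τ0, hτ0I, hτ0⟩ hσ hMf
    have hσnil : σ = [] := List.length_eq_zero_iff.mp (Nat.le_zero.mp hlen)
    subst hσnil
    cases hσ
    exact ⟨Mb, .refl, hmm, ⟨_, ⟨τ0, hτ0I, hτ0⟩, hMf⟩⟩
  | succ n ih =>
    rintro σ hlen Mb M Mf hmm ⟨τ0, hτ0I, hτ0⟩ hσ hMf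
    rcases split_list TI σ with hall | ⟨σI, t, σr, rfl, hσI, htE'⟩
    · refine ⟨Mb, .refl, hmm, ⟨Mf, ⟨τ0 ++ σ, ?_, fires_append hτ0 hσ⟩, hMf⟩⟩
      intro u hu
      rcases List.mem_append.mp hu with hu | hu
      · exact hτ0I u hu
      · exact hall u hu
    · have htE : t ∈ TE := (hbp.1 t).mpr htE'
      obtain ⟨M1, hfI, hrest⟩ := fires_split hσ
      cases hrest with
      | @cons _ M2' _ _ _ hen hm hfr =>
        have hfull : N.Fires Mb (τ0 ++ σI) M1 := fires_append hτ0 hfI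
        have hfullI : ∀ u ∈ τ0 ++ σI, u ∈ TI := by
          intro u hu
          rcases List.mem_append.mp hu with hu | hu
          · exact hτ0I u hu
          · exact hσI u hu
        have hexpl : (τ0 ++ σI) ∈ N.Expl TI Mb t := ⟨hfullI, M1, hfull, hen⟩
        obtain ⟨σs, hσsMin, hσsle⟩ := exists_min_expl hexpl
        obtain ⟨hσsI, Ms, hfs, hens⟩ := hσsMin.1
        set Mb1 : P → ℕ := fun p => Ms p + N.Post p t - N.Pre p t with hMb1def
        have hMb1eq : ∀ p, (Mb1 p : ℤ) = Mb p + (∑ u, N.C p u * σs.count u) + N.C p t := by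
          intro p
          have h1 := fires_marking hfs p
          show ((Ms p + N.Post p t - N.Pre p t : ℕ) : ℤ) = _
          rw [Nat.cast_sub (le_trans (hens p) (Nat.le_add_right _ _))]
          push_cast [PetriNet.C] at h1 ⊢
          rw [h1]; ring
        have hy : (fun u => σs.count u) ∈ N.Ymin TI Mb t := ⟨σs, hσsMin, fun u => rfl⟩
        have hmm1 : N.Minimax TE TI M0 Mb1 := .step hmm htE (Or.inl hy) hMb1eq
        have hstep : N.BrgStep TE TI Mb Mb1 := ⟨t, htE, _, Or.inl hy, hMb1eq⟩
        set y1 : T → ℕ := fun u => (τ0 ++ σI).count u - σs.count u with hy1def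
        have hsupp1 : ∀ u, y1 u ≠ 0 → u ∈ TI := by
          intro u hu
          have : (τ0 ++ σI).count u ≠ 0 := by
            intro hz
            apply hu
            rw [hy1def]
            simp only
            omega
          exact hfullI u (List.count_pos_iff.mp (Nat.pos_of_ne_zero this))
        have hcasty1 : ∀ u, (y1 u : ℤ) = ((τ0 ++ σI).count u : ℤ) - (σs.count u : ℤ) := by
          intro u
          rw [hy1def]
          simp only
          rw [Nat.cast_sub (hσsle u)]
        have heqM2 : ∀ p, (M2' p : ℤ) = Mb1 p + ∑ u, N.C p u * y1 u := by
          intro p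
          have e1 := fires_marking hfull p
          have e2 : (M2' p : ℤ) = M1 p + N.C p t := by
            rw [hm p, Nat.cast_sub (le_trans (hen p) (Nat.le_add_right _ _))]
            push_cast [PetriNet.C]; ring
          have e3 : ∑ u, N.C p u * (y1 u : ℤ)
              = (∑ u, N.C p u * ((τ0 ++ σI).count u : ℤ))
                - ∑ u, N.C p u * (σs.count u : ℤ) := by
            rw [← Finset.sum_sub_distrib]
            refine Finset.sum_congr rfl fun u _ => ?_
            rw [hcasty1 u]; ring
          rw [e2, e1, hMb1eq p, e3]
          ring
        obtain ⟨τ1, hτ1I, hfτ1, -⟩ :=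
          acyclic_fire hbp.2 (∑ u, y1 u) y1 Mb1 M2' rfl hsupp1 heqM2
        have hlen' : σr.length ≤ n := by
          simp only [List.length_append, List.length_cons] at hlen
          omega
        obtain ⟨Mb', hsteps, hmm', hne⟩ :=
          ih σr hlen' Mb1 M2' Mf hmm1 ⟨τ1, hτ1I, hfτ1⟩ hfr hMf
        exact ⟨Mb', .head hstep hsteps, hmm', hne⟩

end Aux2


open PetriNet in
/-- The minimax-BRG of a plant is unobstructed iff every
minimax basis marking is nonblocking. -/
theorem statement5 {P T : Type} [Fintype T] [DecidableEq T]
    (N : PetriNet P T) (M0 : P → ℕ) (TE TI : Set T)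
    (hbp : N.IsBasisPartition TE TI)
    (MF : Set (P → ℕ)) (hMF : MF ⊆ N.Reach M0) :
    N.Unobstructed TE TI M0 MF ↔
      ∀ Mb : P → ℕ, N.Minimax TE TI M0 Mb → (N.Reach Mb ∩ MF).Nonempty := by
  constructor
  · intro h Mb hMb
    obtain ⟨Mb', hsteps, hMb', Mf, hMfR, hMfF⟩ := h Mb hMb
    obtain ⟨σ1, h1⟩ := steps_fires hsteps
    obtain ⟨σ2, -, h2⟩ := hMfR
    exact ⟨Mf, ⟨σ1 ++ σ2, fires_append h1 h2⟩, hMfF⟩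
  · intro h Mb hMb
    obtain ⟨Mf, ⟨σ, hσ⟩, hMfF⟩ := h Mb hMb
    exact key hbp M0 MF σ.length σ (le_refl _) Mb Mb Mf hMb
      ⟨[], by simp, .nil Mb⟩ hσ hMfF
end

section
/- Let ⟨N, M0⟩ be a bounded marked Petri net with a basis partition π = (T_E, T_I) such that every implicit transition has at least one input place (for every t ∈ T_I there is p ∈ P with Pre(p,t) > 0). Then for every M ∈ R(N, M0), the set { φ(σ) | σ ∈ T_I* and σ is enabled at M } of firing vectors of implicit firing sequences enabled at M is finite; in particular, the lengths of implicit firing sequences enabled at M are uniformly bounded. -/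
open scoped BigOperators

section Aux
variable {P T : Type} [Fintype T] [DecidableEq T]

private lemma sum_mul_count_cons (g : T → ℕ) (t : T) (σ : List T) :
    ∑ u, g u * ((t :: σ).count u) = (∑ u, g u * σ.count u) + g t := by
  have : ∀ u, g u * ((t :: σ).count u)
      = g u * σ.count u + (if u = t then g u else 0) := by
    intro u
    by_cases h : u = t
    · subst h; simp [List.count_cons, mul_add]
    · simp [List.count_cons, h, Ne.symm h]
  rw [Finset.sum_congr rfl fun u _ => this u, Finset.sum_add_distrib,
    Finset.sum_ite_eq' Finset.univ t g]
  simp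

private lemma fires_count (N : PetriNet P T) :
    ∀ {σ : List T} {M M' : P → ℕ}, N.Fires M σ M' →
      ∀ p, M' p + ∑ u, N.Pre p u * σ.count u
        = M p + ∑ u, N.Post p u * σ.count u := by
  intro σ
  induction σ with
  | nil =>
    intro M M' h p
    cases h
    simp
  | cons t σ ih =>
    intro M M' h p
    cases h with
    | cons hen heq hF =>
      rename_i M1
      have h1 := ih hF p
      have h2 := heq p
      have h3 := hen p
      rw [sum_mul_count_cons, sum_mul_count_cons]
      omega

private lemma length_eq_sum_count_s7 (σ : List T) : σ.length = ∑ u, σ.count u := by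
  induction σ with
  | nil => simp
  | cons t σ ih =>
    have := sum_mul_count_cons (fun _ => 1) t σ
    simp only [one_mul] at this
    simp [this, ih]

end Aux

open PetriNet in
/-- In a bounded net whose implicit transitions all have an
input place, the set of firing vectors of implicit sequences enabled at any
reachable marking is finite; in particular their lengths are uniformly
bounded. -/
theorem statement7 {P T : Type} [Fintype T] [DecidableEq T]
    (N : PetriNet P T) (M0 : P → ℕ) (TE TI : Set T)
    (hbp : N.IsBasisPartition TE TI) (hbnd : N.Bounded M0)
    (hinput : ∀ t ∈ TI, ∃ p : P, 0 < N.Pre p t)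
    (M : P → ℕ) (hM : M ∈ N.Reach M0) :
    ({y : T → ℕ | ∃ σ : List T, (∀ u ∈ σ, u ∈ TI) ∧
        (∃ M', N.Fires M σ M') ∧ ∀ u, σ.count u = y u}).Finite ∧
      ∃ L : ℕ, ∀ σ : List T, (∀ u ∈ σ, u ∈ TI) →
        (∃ M', N.Fires M σ M') → σ.length ≤ L := by
  classical
  obtain ⟨k, hk⟩ := hbnd
  have hMk : ∀ p, M p ≤ k := hk M hM
  set r : T → T → Prop :=
    fun u t => Relation.TransGen (N.Arc TI) (Sum.inr u) (Sum.inr t) with hr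
  have hwf : WellFounded r := by
    haveI : IsTrans T r := ⟨fun a b c h1 h2 => h1.trans h2⟩
    haveI : IsIrrefl T r := ⟨fun t h => hbp.2 _ h⟩
    exact Finite.wellFounded_of_trans_of_irrefl r
  have key : ∀ t : T, ∃ B : ℕ, ∀ σ : List T, (∀ u ∈ σ, u ∈ TI) →
      (∃ M', N.Fires M σ M') → σ.count t ≤ B := by
    intro t
    induction t using hwf.induction with
    | _ t IH =>
      by_cases ht : t ∈ TI
      · obtain ⟨p, hp⟩ := hinput t ht
        refine ⟨k + ∑ u, N.Post p u * (if h : r u t then (IH u h).choose else 0), ?_⟩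
        rintro σ hσ ⟨M', hF⟩
        have heq := fires_count N hF p
        have hbound : ∀ u ∈ Finset.univ, N.Post p u * σ.count u
            ≤ N.Post p u * (if h : r u t then (IH u h).choose else 0) := by
          intro u _
          rcases Nat.eq_zero_or_pos (σ.count u) with h0 | hpos
          · simp [h0]
          rcases Nat.eq_zero_or_pos (N.Post p u) with hq | hq
          · simp [hq]
          have hu : u ∈ TI := hσ u (List.count_pos_iff.mp hpos)
          have hrel : r u t :=
            Relation.TransGen.head (show N.Arc TI (Sum.inr u) (Sum.inl p) from ⟨hu, hq⟩)
              (Relation.TransGen.single (show N.Arc TI (Sum.inl p) (Sum.inr t) from ⟨ht, hp⟩))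
          rw [dif_pos hrel]
          exact Nat.mul_le_mul_left _ ((IH u hrel).choose_spec σ hσ ⟨M', hF⟩)
        have hsum := Finset.sum_le_sum hbound
        have h1 : N.Pre p t * σ.count t ≤ ∑ u, N.Pre p u * σ.count u :=
          Finset.single_le_sum (f := fun u => N.Pre p u * σ.count u)
            (fun u _ => Nat.zero_le _) (Finset.mem_univ t)
        have h2 : σ.count t ≤ N.Pre p t * σ.count t :=
          Nat.le_mul_of_pos_left _ hp
        have h3 := hMk p
        omega
      · refine ⟨0, fun σ hσ _ => ?_⟩
        have : t ∉ σ := fun hmem => ht (hσ t hmem)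
        simp [List.count_eq_zero_of_not_mem this]
  choose B hB using key
  constructor
  · apply Set.Finite.subset (Set.Finite.pi (fun u => Set.finite_Iic (B u)))
    rintro y ⟨σ, hσ, hex, hcnt⟩
    intro u _
    simp only [Set.mem_Iic]
    rw [← hcnt u]
    exact hB u σ hσ hex
  · refine ⟨∑ u, B u, fun σ hσ hex => ?_⟩
    rw [length_eq_sum_count_s7]
    exact Finset.sum_le_sum fun u _ => hB u σ hσ hex
end

section
/- Let G = (N, M0, M_F) be a bounded plant with a basis partition π = (T_E, T_I) such that every implicit transition has at least one input place (for every t ∈ T_I there is p ∈ P with Pre(p,t) > 0). Then G is nonblocking if and only if its minimax-BRG is unobstructed and every dead marking in R(N, M0) is final (belongs to M_F). -/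
open scoped BigOperators

namespace PNAux
open PetriNet
set_option linter.unusedSectionVars false

variable {P T : Type} [Fintype T] [DecidableEq T]

lemma sum_count (σ : List T) : ∑ u, σ.count u = σ.length := by
  induction σ with
  | nil => simp
  | cons t σ ih =>
    simp only [List.count_cons, List.length_cons]
    rw [Finset.sum_add_distrib, ih]
    simp [Finset.sum_ite_eq]

lemma fires_append {N : PetriNet P T} {M M' M'' : P → ℕ} {σ σ' : List T}
    (h1 : N.Fires M σ M') (h2 : N.Fires M' σ' M'') : N.Fires M (σ ++ σ') M'' := by
  induction h1 with
  | nil => simpa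
  | cons he hm _ ih => exact Fires.cons he hm (ih h2)

lemma fires_state {N : PetriNet P T} {M M' : P → ℕ} {σ : List T}
    (h : N.Fires M σ M') : ∀ p, (M' p : ℤ) = M p + ∑ u, N.C p u * σ.count u := by
  induction h with
  | nil => simp
  | @cons M M' M'' t σ he hm _ ih =>
    intro p
    have h1 : (M' p : ℤ) = M p + N.C p t := by
      rw [hm p, C]
      have := he p
      push_cast [Nat.sub_add_cancel]
      omega
    rw [ih p, h1]
    simp only [List.count_cons]
    push_cast
    have : ∑ x : T, N.C p x * ((List.count x σ : ℤ) + if (t == x) = true then 1 else 0)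
        = (∑ u, N.C p u * (List.count u σ : ℤ)) + N.C p t := by
      simp only [mul_add, Finset.sum_add_distrib, beq_iff_eq, mul_ite, mul_one, mul_zero]
      congr 1
      rw [Finset.sum_ite_eq]
      simp
    rw [this]
    ring

lemma fires_single {N : PetriNet P T} {M : P → ℕ} {t : T} (h : N.Enabled M t) :
    N.Fires M [t] (fun p => M p + N.Post p t - N.Pre p t) :=
  Fires.cons h (fun _ => rfl) (Fires.nil _)

lemma mark_eq_of_int {M M' : P → ℕ} (h : ∀ p, (M p : ℤ) = M' p) : M = M' := by
  funext p; exact_mod_cast h p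

/-- relation on transitions induced by the implicit subnet -/
def TRel (N : PetriNet P T) (TI : Set T) (u v : T) : Prop :=
  u ∈ TI ∧ v ∈ TI ∧ ∃ p, 0 < N.Post p u ∧ 0 < N.Pre p v

lemma trel_arc {N : PetriNet P T} {TI : Set T} {u v : T} (h : TRel N TI u v) :
    Relation.TransGen (N.Arc TI) (Sum.inr u) (Sum.inr v) := by
  obtain ⟨hu, hv, p, h1, h2⟩ := h
  have a1 : N.Arc TI (Sum.inr u) (Sum.inl p) := by simp [Arc]; exact ⟨hu, h1⟩
  have a2 : N.Arc TI (Sum.inl p) (Sum.inr v) := by simp [Arc]; exact ⟨hv, h2⟩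
  exact Relation.TransGen.head a1 (Relation.TransGen.single a2)

lemma trel_transgen_arc {N : PetriNet P T} {TI : Set T} {u v : T}
    (h : Relation.TransGen (TRel N TI) u v) :
    Relation.TransGen (N.Arc TI) (Sum.inr u) (Sum.inr v) := by
  induction h with
  | single h => exact trel_arc h
  | tail _ h ih => exact ih.trans (trel_arc h)

lemma trel_wf {N : PetriNet P T} {TI : Set T} (hac : N.AcyclicOn TI) :
    WellFounded (Relation.TransGen (TRel N TI)) := by
  have hirr : IsIrrefl T (Relation.TransGen (TRel N TI)) := by
    constructor
    intro x hx
    exact hac (Sum.inr x) (trel_transgen_arc hx)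
  have htr : IsTrans T (Relation.TransGen (TRel N TI)) := inferInstance
  exact Finite.wellFounded_of_trans_of_irrefl _

end PNAux
namespace PNAux
open PetriNet
set_option linter.unusedSectionVars false
set_option maxHeartbeats 1000000

variable {P T : Type} [Fintype T] [DecidableEq T]

/-- Murata: realizability of nonnegative vectors in acyclic subnets. -/
lemma murata {N : PetriNet P T} {TI : Set T} (hac : N.AcyclicOn TI) :
    ∀ (n : ℕ) (x : T → ℕ), (∑ u, x u = n) → (∀ u, 0 < x u → u ∈ TI) →
    ∀ (M M' : P → ℕ), (∀ p, (M' p : ℤ) = M p + ∑ u, N.C p u * x u) →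
    ∃ σ : List T, (∀ u, σ.count u = x u) ∧ (∀ u ∈ σ, u ∈ TI) ∧ N.Fires M σ M' := by
  intro n
  induction n with
  | zero =>
    intro x hsum _ M M' heq
    have hx : ∀ u, x u = 0 := by
      intro u
      have := Finset.sum_eq_zero_iff.mp hsum u (Finset.mem_univ u)
      exact this
    have : M' = M := by
      apply mark_eq_of_int
      intro p
      rw [heq p]
      simp [hx]
    refine ⟨[], by simp [hx], by simp, ?_⟩
    rw [this]; exact Fires.nil M
  | succ n ih =>
    intro x hsum hsupp M M' heq
    -- support nonempty
    have hS : ∃ u, 0 < x u := by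
      by_contra h
      push_neg at h
      have : ∑ u, x u = 0 := Finset.sum_eq_zero (fun u _ => Nat.le_zero.mp (h u))
      omega
    -- pick minimal t in support wrt TransGen TRel
    obtain ⟨t, ht, htmin⟩ := (trel_wf hac).has_min {u | 0 < x u} hS
    have htTI : t ∈ TI := hsupp t ht
    -- no producer of an input place of t is in the support
    have hprod : ∀ p, 0 < N.Pre p t → ∀ u, 0 < x u → N.Post p u = 0 := by
      intro p hp u hu
      by_contra hpost
      have : Relation.TransGen (TRel N TI) u t :=
        Relation.TransGen.single ⟨hsupp u hu, htTI, p, Nat.pos_of_ne_zero hpost, hp⟩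
      exact htmin u hu this
    -- t is enabled at M
    have hen : N.Enabled M t := by
      intro p
      by_cases hp : 0 < N.Pre p t
      · have hCx : ∑ u, N.C p u * (x u : ℤ) = - ∑ u, (N.Pre p u : ℤ) * x u := by
          rw [← Finset.sum_neg_distrib]
          apply Finset.sum_congr rfl
          intro u _
          by_cases hu : 0 < x u
          · rw [C, hprod p hp u hu]; push_cast; ring
          · have : x u = 0 := by omega
            simp [this]
        have hM : (M p : ℤ) = M' p + ∑ u, (N.Pre p u : ℤ) * x u := by
          rw [heq p, hCx]; ring
        have hge : (∑ u, (N.Pre p u : ℤ) * x u) ≥ (N.Pre p t : ℤ) * x t := by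
          apply Finset.single_le_sum (f := fun u => (N.Pre p u : ℤ) * x u)
          · intro u _; positivity
          · exact Finset.mem_univ t
        have : (M p : ℤ) ≥ (N.Pre p t : ℤ) * x t := by
          have h0 : (0:ℤ) ≤ (M' p : ℤ) := by positivity
          omega
        have hxt : (1:ℤ) ≤ x t := by exact_mod_cast ht
        have : (M p : ℤ) ≥ (N.Pre p t : ℤ) := by nlinarith [Nat.cast_nonneg (α := ℤ) (N.Pre p t)]
        exact_mod_cast this
      · omega
    -- fire t, then recurse
    set M1 : P → ℕ := fun p => M p + N.Post p t - N.Pre p t with hM1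
    have hM1int : ∀ p, (M1 p : ℤ) = M p + N.C p t := by
      intro p
      have := hen p
      rw [hM1, C]
      push_cast [Nat.sub_add_cancel]
      omega
    set x' : T → ℕ := fun u => if u = t then x u - 1 else x u with hx'
    have hx'sum : ∑ u, x' u = n := by
      have hxu : ∀ u, x u = x' u + (if u = t then 1 else 0) := by
        intro u
        rw [hx']
        by_cases h : u = t
        · subst h
          have : 1 ≤ x u := ht
          simp; omega
        · simp [h]
      have : ∑ u, x u = (∑ u, x' u) + ∑ u, (if u = t then 1 else 0) := by
        rw [← Finset.sum_add_distrib]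
        exact Finset.sum_congr rfl (fun u _ => hxu u)
      rw [Finset.sum_ite_eq' Finset.univ t (fun _ => 1)] at this
      simp at this
      omega
    have hx'cast : ∀ u, (x' u : ℤ) = x u - (if u = t then 1 else 0) := by
      intro u
      rw [hx']
      by_cases h : u = t
      · subst h
        simp only [if_pos rfl]
        have : 1 ≤ x u := ht
        push_cast [Nat.cast_sub this]
        ring
      · simp [h]
    have hx'supp : ∀ u, 0 < x' u → u ∈ TI := by
      intro u hu
      apply hsupp u
      rw [hx'] at hu
      by_cases h : u = t
      · subst h; simp at hu; omega
      · simpa [h] using hu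
    have heq' : ∀ p, (M' p : ℤ) = M1 p + ∑ u, N.C p u * x' u := by
      intro p
      rw [hM1int p, heq p]
      have : ∑ u, N.C p u * (x' u : ℤ)
          = (∑ u, N.C p u * x u) - N.C p t := by
        calc ∑ u, N.C p u * (x' u : ℤ)
            = ∑ u, (N.C p u * x u - N.C p u * (if u = t then 1 else 0)) := by
              apply Finset.sum_congr rfl; intro u _; rw [hx'cast u]; ring
          _ = (∑ u, N.C p u * x u) - ∑ u, N.C p u * (if u = t then 1 else 0) :=
              Finset.sum_sub_distrib _ _
          _ = (∑ u, N.C p u * x u) - N.C p t := by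
              congr 1
              simp [mul_ite, Finset.sum_ite_eq']
      rw [this]; ring
    obtain ⟨σ, hcnt, hTI, hfir⟩ := ih x' hx'sum hx'supp M1 M' heq'
    refine ⟨t :: σ, ?_, ?_, Fires.cons hen (fun p => rfl) hfir⟩
    · intro u
      rw [List.count_cons, hcnt u, hx']
      by_cases h : u = t
      · subst h
        simp only [if_pos rfl, beq_self_eq_true, if_pos]
        have : 1 ≤ x u := ht
        omega
      · simp [h, Ne.symm h]
    · intro u hu
      rcases List.mem_cons.mp hu with h | h
      · subst h; exact htTI
      · exact hTI u h

end PNAux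
namespace PNAux
open PetriNet
set_option linter.unusedSectionVars false
set_option maxHeartbeats 1000000

variable {P T : Type} [Fintype T] [DecidableEq T]

/-- one implicit firing step -/
def ImpStep (N : PetriNet P T) (TI : Set T) (M M' : P → ℕ) : Prop :=
  ∃ t ∈ TI, N.Enabled M t ∧ M' = fun p => M p + N.Post p t - N.Pre p t

/-- no infinite implicit run: every marking is accessible. -/
lemma acc_impStep {N : PetriNet P T} {TI : Set T} (hac : N.AcyclicOn TI)
    (hinput : ∀ t ∈ TI, ∃ p : P, 0 < N.Pre p t) (M : P → ℕ) :
    Acc (fun M2 M1 => ImpStep N TI M1 M2) M := by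
  by_contra hM
  set r : (P → ℕ) → (P → ℕ) → Prop := fun M2 M1 => ImpStep N TI M1 M2 with hr
  have hstep : ∀ X : P → ℕ, ¬ Acc r X → ∃ X', ImpStep N TI X X' ∧ ¬ Acc r X' := by
    intro X h
    by_contra h'
    push_neg at h'
    exact h (Acc.intro X (fun Y hY => h' Y hY))
  let f : ℕ → {X : P → ℕ // ¬ Acc r X} :=
    fun n => Nat.rec ⟨M, hM⟩
      (fun _ X => ⟨(hstep X.1 X.2).choose, ((hstep X.1 X.2).choose_spec).2⟩) n
  have hf : ∀ n, ImpStep N TI (f n).1 (f (n+1)).1 :=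
    fun n => ((hstep (f n).1 (f n).2).choose_spec).1
  set fM : ℕ → (P → ℕ) := fun n => (f n).1 with hfM
  have hg : ∀ n, ∃ t ∈ TI, N.Enabled (fM n) t ∧
      fM (n+1) = fun p => fM n p + N.Post p t - N.Pre p t := fun n => hf n
  choose gT hgTI hgen hgeq using hg
  -- pigeonhole: some transition fires infinitely often
  have : Infinite ℕ := inferInstance
  obtain ⟨t0, ht0⟩ := Finite.exists_infinite_fiber gT
  have ht0' : (gT ⁻¹' {t0}).Infinite := Set.infinite_coe_iff.mp ht0
  -- minimal infinitely-firing transition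
  obtain ⟨tm, htmS, htmin⟩ := (trel_wf hac).has_min {u | (gT ⁻¹' {u}).Infinite} ⟨t0, ht0'⟩
  have htmTI : tm ∈ TI := by
    obtain ⟨n, hn⟩ := htmS.nonempty
    have : gT n = tm := hn
    rw [← this]; exact hgTI n
  obtain ⟨p, hp⟩ := hinput tm htmTI
  -- producers into p fire finitely often
  have hfin : {n | 0 < N.Post p (gT n)}.Finite := by
    have hsub : {n | 0 < N.Post p (gT n)} ⊆
        ⋃ u ∈ (Finset.univ.filter (fun u => 0 < N.Post p u)), gT ⁻¹' {u} := by
      intro n hn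
      simp only [Set.mem_iUnion, Finset.mem_filter, Finset.mem_univ, true_and]
      exact ⟨gT n, hn, rfl⟩
    apply Set.Finite.subset _ hsub
    apply Set.Finite.biUnion (Finset.finite_toSet _)
    intro u hu
    simp only [Finset.coe_filter, Set.mem_setOf_eq, Finset.mem_univ, true_and] at hu
    by_contra hinf
    have huS : (gT ⁻¹' {u}).Infinite := hinf
    have huTI : u ∈ TI := by
      obtain ⟨n, hn⟩ := huS.nonempty
      have : gT n = u := hn
      rw [← this]; exact hgTI n
    exact htmin u huS (Relation.TransGen.single ⟨huTI, htmTI, p, hu, hp⟩)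
  obtain ⟨N0, hN0⟩ := hfin.bddAbove
  have hpost : ∀ n, N0 + 1 ≤ n → N.Post p (gT n) = 0 := by
    intro n hn
    by_contra h
    have : n ∈ {n | 0 < N.Post p (gT n)} := Nat.pos_of_ne_zero h
    have := hN0 this
    omega
  -- antitone on the tail
  have hanti : ∀ m n, N0 + 1 ≤ m → m ≤ n → fM n p ≤ fM m p := by
    intro m n hm hmn
    induction hmn with
    | refl => exact le_refl _
    | @step n hmn ih =>
      have heq := congrFun (hgeq n) p
      have h0 : N.Post p (gT n) = 0 := hpost n (le_trans hm hmn)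
      simp only [Nat.succ_eq_add_one]
      omega
  -- infinitely many strict decreases
  have hdec : ∀ k, ∃ n, N0 + 1 ≤ n ∧ fM n p + k ≤ fM (N0 + 1) p := by
    intro k
    induction k with
    | zero => exact ⟨N0 + 1, le_refl _, by omega⟩
    | succ k ih =>
      obtain ⟨n, hn, hk⟩ := ih
      obtain ⟨m, hm, hnm⟩ := htmS.exists_gt n
      have hgm : gT m = tm := hm
      have heq := congrFun (hgeq m) p
      rw [hgm] at heq
      have h0 : N.Post p (gT m) = 0 := hpost m (by omega)
      rw [hgm] at h0
      have hen := hgen m p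
      rw [hgm] at hen
      have hmono : fM m p ≤ fM n p := hanti n m hn (le_of_lt hnm)
      refine ⟨m + 1, by omega, ?_⟩
      omega
  obtain ⟨n, _, hn⟩ := hdec (fM (N0 + 1) p + 1)
  omega

/-- from any marking one can reach (implicitly) a marking with no implicit
transition enabled -/
lemma exists_idead {N : PetriNet P T} {TI : Set T} (hac : N.AcyclicOn TI)
    (hinput : ∀ t ∈ TI, ∃ p : P, 0 < N.Pre p t) (M : P → ℕ) :
    ∃ M' σ, (∀ u ∈ σ, u ∈ TI) ∧ N.Fires M σ M' ∧ ∀ t ∈ TI, ¬ N.Enabled M' t := by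
  have H := acc_impStep hac hinput M
  induction H with
  | intro X h ih =>
    by_cases hc : ∃ t ∈ TI, N.Enabled X t
    · obtain ⟨t, htTI, hen⟩ := hc
      obtain ⟨M', σ, h1, h2, h3⟩ := ih _ ⟨t, htTI, hen, rfl⟩
      exact ⟨M', t :: σ, by
        intro u hu
        rcases List.mem_cons.mp hu with h | h
        · subst h; exact htTI
        · exact h1 u h, Fires.cons hen (fun p => rfl) h2, h3⟩
    · push_neg at hc
      exact ⟨X, [], by simp, Fires.nil X, hc⟩

/-- lengths of implicit firing sequences from a fixed marking are bounded -/
lemma length_bound {N : PetriNet P T} {TI : Set T} (hac : N.AcyclicOn TI)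
    (hinput : ∀ t ∈ TI, ∃ p : P, 0 < N.Pre p t) (M : P → ℕ) :
    ∃ B, ∀ (σ : List T) (M' : P → ℕ), (∀ u ∈ σ, u ∈ TI) → N.Fires M σ M' →
      σ.length ≤ B := by
  have H := acc_impStep hac hinput M
  induction H with
  | intro X h ih =>
    choose! G hG using ih
    refine ⟨1 + ∑ t, G (fun p => X p + N.Post p t - N.Pre p t), ?_⟩
    intro σ M' hTI hfir
    cases hfir with
    | nil => simp
    | @cons _ M1 _ t σ' hen hm hfir' =>
      have htTI : t ∈ TI := hTI t List.mem_cons_self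
      have hM1 : M1 = fun p => X p + N.Post p t - N.Pre p t := funext hm
      have hstep : ImpStep N TI X (fun p => X p + N.Post p t - N.Pre p t) :=
        ⟨t, htTI, hen, rfl⟩
      have hlen : σ'.length ≤ G (fun p => X p + N.Post p t - N.Pre p t) := by
        apply hG _ hstep σ' M' (fun u hu => hTI u (List.mem_cons_of_mem t hu))
        rw [← hM1]; exact hfir'
      have hsum : G (fun p => X p + N.Post p t - N.Pre p t)
          ≤ ∑ t', G (fun p => X p + N.Post p t' - N.Pre p t') :=
        Finset.single_le_sum (f := fun t' => G (fun p => X p + N.Post p t' - N.Pre p t'))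
          (fun _ _ => Nat.zero_le _) (Finset.mem_univ t)
      simp only [List.length_cons]
      omega

end PNAux
namespace PNAux
open PetriNet
set_option linter.unusedSectionVars false
set_option maxHeartbeats 1000000

variable {P T : Type} [Fintype T] [DecidableEq T]

lemma count_lt_length {σ σ' : List T} (hle : ∀ u, σ'.count u ≤ σ.count u)
    (hne : ∃ u, σ'.count u ≠ σ.count u) : σ'.length < σ.length := by
  rw [← sum_count, ← sum_count]
  obtain ⟨u, hu⟩ := hne
  exact Finset.sum_lt_sum (fun i _ => hle i)
    ⟨u, Finset.mem_univ u, lt_of_le_of_ne (hle u) hu⟩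

lemma exists_min_expl {N : PetriNet P T} {TI : Set T} {M : P → ℕ} {t : T} :
    ∀ (n : ℕ) (σ : List T), σ.length ≤ n → σ ∈ N.Expl TI M t →
    ∃ σm ∈ N.ExplMin TI M t, ∀ u, σm.count u ≤ σ.count u := by
  intro n
  induction n with
  | zero =>
    intro σ hlen hσ
    by_cases hm : σ ∈ N.ExplMin TI M t
    · exact ⟨σ, hm, fun u => le_refl _⟩
    · exfalso
      simp only [ExplMin, Set.mem_setOf_eq, not_and, not_not] at hm
      obtain ⟨σ', hσ', hle, hne⟩ := hm hσ
      have := count_lt_length hle hne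
      omega
  | succ n ih =>
    intro σ hlen hσ
    by_cases hm : σ ∈ N.ExplMin TI M t
    · exact ⟨σ, hm, fun u => le_refl _⟩
    · simp only [ExplMin, Set.mem_setOf_eq, not_and, not_not] at hm
      obtain ⟨σ', hσ', hle, hne⟩ := hm hσ
      have hl := count_lt_length hle hne
      obtain ⟨σm, h1, h2⟩ := ih σ' (by omega) hσ'
      exact ⟨σm, h1, fun u => le_trans (h2 u) (hle u)⟩

lemma exists_max_expl {N : PetriNet P T} {TI : Set T} (hac : N.AcyclicOn TI)
    (hinput : ∀ t ∈ TI, ∃ p : P, 0 < N.Pre p t) {M : P → ℕ} {t : T} {σ : List T}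
    (hσ : σ ∈ N.Expl TI M t) :
    ∃ σx ∈ N.ExplMax TI M t, ∀ u, σ.count u ≤ σx.count u := by
  obtain ⟨B, hB⟩ := length_bound hac hinput M
  set S : Set ℕ := {s | ∃ σ', σ' ∈ N.Expl TI M t ∧ (∀ u, σ.count u ≤ σ'.count u) ∧
    s = σ'.length} with hS
  have hne : S.Nonempty := ⟨σ.length, σ, hσ, fun u => le_refl _, rfl⟩
  have hbdd : BddAbove S := by
    refine ⟨B, ?_⟩
    rintro s ⟨σ', ⟨hTI', M', hfir', _⟩, _, rfl⟩
    exact hB σ' M' hTI' hfir'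
  obtain ⟨σx, hσx, hcle, hlen⟩ := Nat.sSup_mem hne hbdd
  refine ⟨σx, ⟨hσx, ?_⟩, hcle⟩
  rintro ⟨σ'', hσ'', hle, u, hne'⟩
  have hlt : σx.length < σ''.length :=
    count_lt_length (σ := σ'') (σ' := σx) hle ⟨u, fun h => hne' h.symm⟩
  have : σ''.length ∈ S := ⟨σ'', hσ'', fun v => le_trans (hcle v) (hle v), rfl⟩
  have := le_csSup hbdd this
  omega

end PNAux
namespace PNAux
open PetriNet
set_option linter.unusedSectionVars false
set_option maxHeartbeats 1000000

variable {P T : Type} [Fintype T] [DecidableEq T]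

lemma expl_step {N : PetriNet P T} {TI : Set T} {Mb : P → ℕ} {t : T} {σe : List T}
    (hσe : σe ∈ N.Expl TI Mb t) :
    ∃ Mt : P → ℕ, N.Fires Mb (σe ++ [t]) Mt ∧
      ∀ p, (Mt p : ℤ) = Mb p + (∑ u, N.C p u * σe.count u) + N.C p t := by
  obtain ⟨hTI, Mm, hfir, hen⟩ := hσe
  refine ⟨fun p => Mm p + N.Post p t - N.Pre p t,
    fires_append hfir (fires_single hen), ?_⟩
  intro p
  have h1 : ((Mm p + N.Post p t - N.Pre p t : ℕ) : ℤ) = Mm p + N.C p t := by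
    have := hen p
    rw [C]
    push_cast [Nat.sub_add_cancel]
    omega
  rw [h1, fires_state hfir p]

lemma brgStep_reach {N : PetriNet P T} {TE TI : Set T} {M1 M2 : P → ℕ}
    (h : N.BrgStep TE TI M1 M2) : ∃ σ, N.Fires M1 σ M2 := by
  obtain ⟨t, _, y, hy, heq⟩ := h
  have hyE : ∃ σe ∈ N.Expl TI M1 t, ∀ u, σe.count u = y u := by
    rcases hy with h | h
    · obtain ⟨σe, hσe, hc⟩ := h; exact ⟨σe, hσe.1, hc⟩
    · obtain ⟨σe, hσe, hc⟩ := h; exact ⟨σe, hσe.1, hc⟩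
  obtain ⟨σe, hσe, hc⟩ := hyE
  obtain ⟨Mt, hfir, hteq⟩ := expl_step hσe
  have : Mt = M2 := by
    apply mark_eq_of_int
    intro p
    rw [hteq p, heq p]
    congr 1
    congr 1
    exact Finset.sum_congr rfl (fun u _ => by rw [hc u])
  rw [← this]
  exact ⟨σe ++ [t], hfir⟩

lemma brgPath_reach {N : PetriNet P T} {TE TI : Set T} {M1 M2 : P → ℕ}
    (h : Relation.ReflTransGen (N.BrgStep TE TI) M1 M2) : ∃ σ, N.Fires M1 σ M2 := by
  induction h with
  | refl => exact ⟨[], Fires.nil _⟩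
  | tail _ hstep ih =>
    obtain ⟨σ, hσ⟩ := ih
    obtain ⟨σ', hσ'⟩ := brgStep_reach hstep
    exact ⟨σ ++ σ', fires_append hσ hσ'⟩

lemma minimax_reach {N : PetriNet P T} {TE TI : Set T} {M0 Mb : P → ℕ}
    (h : N.Minimax TE TI M0 Mb) : ∃ σ, N.Fires M0 σ Mb := by
  induction h with
  | base => exact ⟨[], Fires.nil _⟩
  | @step M M' t y _ htE hy heq ih =>
    obtain ⟨σ, hσ⟩ := ih
    obtain ⟨σ', hσ'⟩ := brgStep_reach ⟨t, htE, y, hy, heq⟩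
    exact ⟨σ ++ σ', fires_append hσ hσ'⟩

lemma covering {N : PetriNet P T} {TE TI : Set T} {M0 : P → ℕ}
    (hbp : N.IsBasisPartition TE TI) :
    ∀ (σ : List T) (M M2 : P → ℕ), N.Fires M σ M2 →
    ∀ Mb, N.Minimax TE TI M0 Mb → (∃ τ, (∀ u ∈ τ, u ∈ TI) ∧ N.Fires Mb τ M) →
    ∃ Mb', Relation.ReflTransGen (N.BrgStep TE TI) Mb Mb' ∧ N.Minimax TE TI M0 Mb' ∧
      ∃ τ', (∀ u ∈ τ', u ∈ TI) ∧ N.Fires Mb' τ' M2 := by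
  intro σ
  induction σ with
  | nil =>
    intro M M2 hfir Mb hMb hτ
    cases hfir
    exact ⟨Mb, Relation.ReflTransGen.refl, hMb, hτ⟩
  | cons t σ ih =>
    intro M M2 hfir Mb hMb hτ
    obtain ⟨τ, hτTI, hτfir⟩ := hτ
    cases hfir with
    | @cons _ M1 _ _ _ hen hm hrest =>
      by_cases htI : t ∈ TI
      · -- implicit step: absorb into τ
        refine ih M1 M2 hrest Mb hMb ⟨τ ++ [t], ?_, ?_⟩
        · intro u hu
          rcases List.mem_append.mp hu with h | h
          · exact hτTI u h
          · rw [List.mem_singleton.mp h]; exact htI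
        · exact fires_append hτfir (Fires.cons hen hm (Fires.nil _))
      · -- explicit step
        have htE : t ∈ TE := (hbp.1 t).mpr htI
        have hτE : τ ∈ N.Expl TI Mb t := ⟨hτTI, M, hτfir, hen⟩
        obtain ⟨σm, hmin, hcle⟩ := exists_min_expl τ.length τ (le_refl _) hτE
        obtain ⟨Mt, hfirt, hteq⟩ := expl_step hmin.1
        have hbrg : N.BrgStep TE TI Mb Mt :=
          ⟨t, htE, fun u => σm.count u, Or.inl ⟨σm, hmin, fun u => rfl⟩, hteq⟩
        have hMt : N.Minimax TE TI M0 Mt :=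
          Minimax.step hMb htE (Or.inl ⟨σm, hmin, fun u => rfl⟩) hteq
        -- leftover vector
        set x : T → ℕ := fun u => τ.count u - σm.count u with hx
        have hxsupp : ∀ u, 0 < x u → u ∈ TI := by
          intro u hu
          simp only [hx] at hu
          have : 0 < τ.count u := by omega
          exact hτTI u (List.count_pos_iff.mp this)
        have hxcast : ∀ u, (x u : ℤ) = τ.count u - σm.count u := by
          intro u
          simp only [hx]
          push_cast [Nat.cast_sub (hcle u)]
          ring
        have hM1eq : ∀ p, (M1 p : ℤ) = Mt p + ∑ u, N.C p u * x u := by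
          intro p
          have e1 : (M1 p : ℤ) = M p + N.C p t := by
            have := hen p
            rw [hm p, C]
            push_cast [Nat.sub_add_cancel]
            omega
          have e2 := fires_state hτfir p
          have e3 := hteq p
          have e4 : ∑ u, N.C p u * (x u : ℤ)
              = (∑ u, N.C p u * τ.count u) - ∑ u, N.C p u * σm.count u := by
            rw [← Finset.sum_sub_distrib]
            apply Finset.sum_congr rfl
            intro u _
            rw [hxcast u]
            ring
          rw [e1, e2, e3, e4]
          ring
        obtain ⟨ρ, _, hρTI, hρfir⟩ :=
          murata hbp.2 (∑ u, x u) x rfl hxsupp Mt M1 hM1eq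
        obtain ⟨Mb', hpath, hMb', hτ'⟩ := ih M1 M2 hrest Mt hMt ⟨ρ, hρTI, hρfir⟩
        exact ⟨Mb', Relation.ReflTransGen.head hbrg hpath, hMb', hτ'⟩

end PNAux
open PetriNet in
/-- **Theorem 2.** A bounded plant is nonblocking iff its
minimax-BRG is unobstructed and all its dead markings are final. -/
theorem statement12 {P T : Type} [Fintype T] [DecidableEq T]
    (N : PetriNet P T) (M0 : P → ℕ) (TE TI : Set T)
    (hbp : N.IsBasisPartition TE TI) (hbnd : N.Bounded M0)
    (hinput : ∀ t ∈ TI, ∃ p : P, 0 < N.Pre p t)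
    (MF : Set (P → ℕ)) (hMF : MF ⊆ N.Reach M0) :
    (∀ M ∈ N.Reach M0, (N.Reach M ∩ MF).Nonempty) ↔
      (N.Unobstructed TE TI M0 MF ∧
        ∀ M ∈ N.Reach M0, N.Dead M → M ∈ MF) := by
  constructor
  · intro hnb
    constructor
    · -- nonblocking → unobstructed
      intro Mb hMb
      obtain ⟨σ0, hσ0⟩ := PNAux.minimax_reach hMb
      obtain ⟨Mf, hMfR, hMfF⟩ := hnb Mb ⟨σ0, hσ0⟩
      obtain ⟨σ, hσ⟩ := hMfR
      obtain ⟨Mb', hpath, hmm, τ', hτTI, hτfir⟩ :=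
        PNAux.covering hbp σ Mb Mf hσ Mb hMb ⟨[], by simp, Fires.nil Mb⟩
      exact ⟨Mb', hpath, hmm, Mf, ⟨τ', hτTI, hτfir⟩, hMfF⟩
    · -- nonblocking → dead markings are final
      intro M hM hdead
      obtain ⟨Mf, hMfR, hMfF⟩ := hnb M hM
      obtain ⟨σ, hσ⟩ := hMfR
      cases hσ with
      | nil => exact hMfF
      | cons hen _ _ => exact absurd hen (hdead _)
  · rintro ⟨hunob, hdead⟩ M hM
    obtain ⟨σ0, hσ0⟩ := hM
    -- cover M by a minimax basis marking Mb
    obtain ⟨Mb, _, hMb, τ1, hτ1TI, hτ1fir⟩ :=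
      PNAux.covering hbp σ0 M0 M hσ0 M0 Minimax.base ⟨[], by simp, Fires.nil _⟩
    -- fire a maximal implicit sequence from M
    obtain ⟨Mt, τ2, hτ2TI, hτ2fir, hnoimp⟩ := PNAux.exists_idead hbp.2 hinput M
    by_cases hd : N.Dead Mt
    · -- Mt is dead hence final, and reachable from M
      exact ⟨Mt, ⟨τ2, hτ2fir⟩, hdead Mt ⟨σ0 ++ τ2, PNAux.fires_append hσ0 hτ2fir⟩ hd⟩
    · -- some transition t is enabled at Mt; it must be explicit
      simp only [Dead] at hd
      push_neg at hd
      obtain ⟨t, hent⟩ := hd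
      have htI : t ∉ TI := fun h => hnoimp t h hent
      have htE : t ∈ TE := (hbp.1 t).mpr htI
      -- τ1 ++ τ2 is an explanation of t at Mb
      have hτE : (τ1 ++ τ2) ∈ N.Expl TI Mb t := by
        refine ⟨?_, Mt, PNAux.fires_append hτ1fir hτ2fir, hent⟩
        intro u hu
        rcases List.mem_append.mp hu with h | h
        · exact hτ1TI u h
        · exact hτ2TI u h
      obtain ⟨σx, hσxmax, hcle⟩ := PNAux.exists_max_expl hbp.2 hinput hτE
      obtain ⟨Mb2, hfir2, h2eq⟩ := PNAux.expl_step hσxmax.1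
      have hMb2 : N.Minimax TE TI M0 Mb2 :=
        Minimax.step hMb htE (Or.inr ⟨σx, hσxmax, fun u => rfl⟩) h2eq
      -- firing t at Mt in the real net
      have hfirM1 : N.Fires M (τ2 ++ [t]) (fun p => Mt p + N.Post p t - N.Pre p t) :=
        PNAux.fires_append hτ2fir (PNAux.fires_single hent)
      set M1 : P → ℕ := fun p => Mt p + N.Post p t - N.Pre p t with hM1
      -- M1 can implicitly reach Mb2 (Murata on the leftover vector)
      set x : T → ℕ := fun u => σx.count u - (τ1 ++ τ2).count u with hx
      have hxsupp : ∀ u, 0 < x u → u ∈ TI := by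
        intro u hu
        simp only [hx] at hu
        have : 0 < σx.count u := by omega
        exact hσxmax.1.1 u (List.count_pos_iff.mp this)
      have hxcast : ∀ u, (x u : ℤ) = σx.count u - (τ1 ++ τ2).count u := by
        intro u
        simp only [hx]
        push_cast [Nat.cast_sub (hcle u)]
        ring
      have heqM1 : ∀ p, (Mb2 p : ℤ) = M1 p + ∑ u, N.C p u * x u := by
        intro p
        have e1 : (M1 p : ℤ) = Mt p + N.C p t := by
          have := hent p
          simp only [hM1, C]
          push_cast [Nat.sub_add_cancel]
          omega
        have e2 := PNAux.fires_state (PNAux.fires_append hτ1fir hτ2fir) p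
        have e3 := h2eq p
        have e4 : ∑ u, N.C p u * (x u : ℤ)
            = (∑ u, N.C p u * σx.count u) - ∑ u, N.C p u * (τ1 ++ τ2).count u := by
          rw [← Finset.sum_sub_distrib]
          apply Finset.sum_congr rfl
          intro u _
          rw [hxcast u]
          ring
        rw [e1, e2, e3, e4]
        ring
      obtain ⟨ρ, _, hρTI, hρfir⟩ :=
        PNAux.murata hbp.2 (∑ u, x u) x rfl hxsupp M1 Mb2 heqM1
      -- apply unobstructedness at Mb2
      obtain ⟨Mb3, hpath3, _, Mf, ⟨τf, hτfTI, hτffir⟩, hMfF⟩ := hunob Mb2 hMb2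
      obtain ⟨σ3, hσ3⟩ := PNAux.brgPath_reach hpath3
      exact ⟨Mf, ⟨(τ2 ++ [t]) ++ (ρ ++ (σ3 ++ τf)),
        PNAux.fires_append hfirM1 (PNAux.fires_append hρfir
          (PNAux.fires_append hσ3 hτffir))⟩, hMfF⟩
end
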